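/- arXiv:1604.00528 — 4 statements merged into one kernel-verified Lean document; each statement's English description precedes it below -/
import Mathlib

section
/- Let h ⊆ g₂* be an indecomposable Lie subalgebra whose representation on V is not irreducible. Then the socle of V as h-module, i.e. the sum of all irreducible h-invariant subspaces of V, is an isotropic subspace of V. -/
noncomputable section

open scoped Matrix

attribute [local instance 100] LieRing.ofAssociativeRing

abbrev V7 : Type := Fin 7 → ℝ
abbrev M7 : Type := Matrix (Fin 7) (Fin 7) ℝ
abbrev M2 : Type := Matrix (Fin 2) (Fin 2) ℝ

/-- standard basis vectors of `V7` -/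
def stdB (i : Fin 7) : V7 := Pi.single i 1

/-- the symmetric bilinear form of signature (4,3):
`⟨x,y⟩ = x₁y₅ + x₅y₁ + x₂y₆ + x₆y₂ + x₃y₇ + x₇y₃ − x₄y₄` (1-indexed). -/
def bform (x y : V7) : ℝ :=
  x 0 * y 4 + x 4 * y 0 + x 1 * y 5 + x 5 * y 1 + x 2 * y 6 + x 6 * y 2 - x 3 * y 3

/-- `e^i ∧ e^j ∧ e^k` evaluated on a triple of vectors. -/
def wedge3 (i j k : Fin 7) (u v w : V7) : ℝ :=
  u i * (v j * w k - v k * w j) - u j * (v i * w k - v k * w i)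
    + u k * (v i * w j - v j * w i)

/-- the generic 3-form
`ω₀ = √2(e¹∧e⁶∧e⁷ + e²∧e³∧e⁵) − e⁴∧(e¹∧e⁵ − e²∧e⁶ − e³∧e⁷)` (1-indexed). -/
def omega0 (u v w : V7) : ℝ :=
  Real.sqrt 2 * (wedge3 0 5 6 u v w + wedge3 1 2 4 u v w)
    - (wedge3 3 0 4 u v w - wedge3 3 1 5 u v w - wedge3 3 2 6 u v w)

/-- membership in `g₂*` -/
def inG2 (X : M7) : Prop :=
  ∀ u v w : V7,
    omega0 (X.mulVec u) v w + omega0 u (X.mulVec v) w + omega0 u v (X.mulVec w) = 0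

def InvariantUnder (h : LieSubalgebra ℝ M7) (U : Submodule ℝ V7) : Prop :=
  ∀ X ∈ h, ∀ v ∈ U, X.mulVec v ∈ U

def IsIsotropic (U : Submodule ℝ V7) : Prop :=
  ∀ u ∈ U, ∀ u' ∈ U, bform u u' = 0

def IsNondeg (U : Submodule ℝ V7) : Prop :=
  ∀ u ∈ U, (∀ u' ∈ U, bform u u' = 0) → u = 0

def IsIndecomposable (h : LieSubalgebra ℝ M7) : Prop :=
  ∀ U : Submodule ℝ V7, InvariantUnder h U → U ≠ ⊥ → U ≠ ⊤ → ¬ IsNondeg U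

def IsIrreducibleSub (h : LieSubalgebra ℝ M7) (U : Submodule ℝ V7) : Prop :=
  InvariantUnder h U ∧ U ≠ ⊥ ∧
    ∀ W : Submodule ℝ V7, InvariantUnder h W → W ≤ U → W = ⊥ ∨ W = U

/-- the socle: sum of all irreducible invariant subspaces -/
def socleV (h : LieSubalgebra ℝ M7) : Submodule ℝ V7 :=
  sSup {U | IsIrreducibleSub h U}

def sqrt2 : ℝ := Real.sqrt 2

/-- the matrix `h(A,v,u,y)` of the Type I normal form -/
def hImat (A : M2) (v : ℝ) (u y : Fin 2 → ℝ) : M7 :=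
  !![A.trace, -u 1, u 0, sqrt2 * v, 0, -y 0, -y 1;
     0, A 0 0, A 0 1, sqrt2 * u 0, y 0, 0, v;
     0, A 1 0, A 1 1, sqrt2 * u 1, y 1, -v, 0;
     0, 0, 0, 0, sqrt2 * v, sqrt2 * u 0, sqrt2 * u 1;
     0, 0, 0, 0, -A.trace, 0, 0;
     0, 0, 0, 0, u 1, -A 0 0, -A 1 0;
     0, 0, 0, 0, -u 0, -A 0 1, -A 1 1]

def hIset : Set M7 := {X | ∃ A v u y, X = hImat A v u y}

def mSet : Set M7 := {X | ∃ v u y, X = hImat 0 v u y}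

def hsSet : Set M7 := {X | ∃ A v y, X = hImat A v 0 y}

/-- a basis realizing the Type I normal form -/
def TypeIBasis (b : Module.Basis (Fin 7) ℝ V7) : Prop :=
  (∀ i j, bform (b i) (b j) = bform (stdB i) (stdB j)) ∧
  (∀ i j k, omega0 (b i) (b j) (b k) = omega0 (stdB i) (stdB j) (stdB k))

/-- the matrix of (the endomorphism given by) `X` with respect to the basis `b` -/
def matrixWrt (b : Module.Basis (Fin 7) ℝ V7) (X : M7) : M7 :=
  LinearMap.toMatrix b b X.mulVecLin

def matSet (b : Module.Basis (Fin 7) ℝ V7) (h : LieSubalgebra ℝ M7) : Set M7 :=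
  matrixWrt b '' (h : Set M7)

/-- the space `K(S)` of algebraic curvature maps with values in `S` -/
def curvSet (S : Set M7) : Set (V7 →ₗ[ℝ] V7 →ₗ[ℝ] M7) :=
  {R | (∀ x, R x x = 0) ∧ (∀ x y, R x y ∈ S) ∧
    ∀ x y z, (R x y).mulVec z + (R y z).mulVec x + (R z x).mulVec y = 0}

/-- `h` is a Berger algebra -/
def IsBerger (h : LieSubalgebra ℝ M7) : Prop :=
  h.toSubmodule =
    Submodule.span ℝ {X | ∃ R ∈ curvSet (h : Set M7), ∃ x y : V7, X = R x y}

def Cmat (a : ℝ) : M2 := !![a, -1; 1, a]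
def Smat : M2 := !![1, 1; 0, 1]
def Nmat : M2 := !![0, 1; 0, 0]
def Dmat (μ : ℝ) : M2 := !![1, 0; 0, μ]
def diagSet : Set M2 := {A | ∃ a d : ℝ, A = !![a, 0; 0, d]}
def u1Set : Set M2 := {A | ∃ a b : ℝ, A = !![a, -b; b, a]}
def b2Set : Set M2 := {A | A 1 0 = 0}
def b2hatSet : Set M2 := {A | ∃ s t : ℝ, A = s • (1 : M2) + t • Nmat}
def sLamSet (lam : ℝ) : Set M2 :=
  {A | ∃ s t : ℝ, A = s • !![lam, 0; 0, lam - 1] + t • Nmat}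
def slSet : Set M2 := {A | A.trace = 0}
def spanLine (X : M2) : Set M2 := {A | ∃ t : ℝ, A = t • X}

/-- the projection `h(A,v,u,y) ↦ A` applied to a subset of `h^I` -/
def aprojI (S : Set M7) : Set M2 := {A | ∃ v u y, hImat A v u y ∈ S}

/-- `a ⋉ m` inside `h^I` -/
def semidirI (aS : Set M2) : Set M7 :=
  {X | ∃ A ∈ aS, ∃ v u y, X = hImat A v u y}

def bformII (x y : V7) : ℝ :=
  x 0 * y 5 + x 5 * y 0 + x 1 * y 6 + x 6 * y 1 + x 2 * y 4 + x 4 * y 2 - x 3 * y 3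

def omegaII (u v w : V7) : ℝ :=
  Real.sqrt 2 * (-(wedge3 0 4 6 u v w) + wedge3 1 2 5 u v w)
    - (wedge3 3 0 5 u v w - wedge3 3 1 6 u v w - wedge3 3 2 4 u v w)

/-- a basis realizing the Type II normal form -/
def TypeIIBasis (b : Module.Basis (Fin 7) ℝ V7) : Prop :=
  (∀ i j, bform (b i) (b j) = bformII (stdB i) (stdB j)) ∧
  (∀ i j k, omega0 (b i) (b j) (b k) = omegaII (stdB i) (stdB j) (stdB k))

def sigmaMat (z : Fin 4 → ℝ) : Matrix (Fin 2) (Fin 3) ℝ :=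
  !![z 1, sqrt2 * z 2, z 3; z 0, sqrt2 * z 1, z 2]

def rhoMat (A : M2) : Matrix (Fin 3) (Fin 3) ℝ :=
  !![A 0 0 - A 1 1, -(sqrt2 * A 0 1), 0;
     -(sqrt2 * A 1 0), 0, -(sqrt2 * A 0 1);
     0, -(sqrt2 * A 1 0), -(A 0 0) + A 1 1]

/-- the matrix `h(A,z,c)` of the Type II normal form -/
def hIImat (A : M2) (z : Fin 4 → ℝ) (c : ℝ) : M7 :=
  !![A 0 0, A 0 1, z 1, sqrt2 * z 2, z 3, 0, -c;
     A 1 0, A 1 1, z 0, sqrt2 * z 1, z 2, c, 0;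
     0, 0, A 0 0 - A 1 1, -(sqrt2 * A 0 1), 0, -z 3, -z 2;
     0, 0, -(sqrt2 * A 1 0), 0, -(sqrt2 * A 0 1), sqrt2 * z 2, sqrt2 * z 1;
     0, 0, 0, -(sqrt2 * A 1 0), -(A 0 0) + A 1 1, -z 1, -z 0;
     0, 0, 0, 0, 0, -(A 0 0), -(A 1 0);
     0, 0, 0, 0, 0, -(A 0 1), -(A 1 1)]

def hIIset : Set M7 := {X | ∃ A z c, X = hIImat A z c}

def nSet : Set M7 := {X | ∃ z c, X = hIImat 0 z c}

/-- the projection `h(A,z,c) ↦ A` applied to a subset of `h^II` -/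
def aprojII (S : Set M7) : Set M2 := {A | ∃ z c, hIImat A z c ∈ S}

/-- `a ⋉ n₁` inside `h^II`, for `n₁ = {h(0,z,c) : z ∈ Z, c ∈ ℝ}` -/
def semidirII (aS : Set M2) (Z : Set (Fin 4 → ℝ)) : Set M7 :=
  {X | ∃ A ∈ aS, ∃ z ∈ Z, ∃ c : ℝ, X = hIImat A z c}

/-- `ℝ·h(A₀,z₀,0) + {h(0,z,c) : z ∈ Z, c ∈ ℝ}` inside `h^II` -/
def affSemiII (A0 : M2) (z0 : Fin 4 → ℝ) (Z : Set (Fin 4 → ℝ)) : Set M7 :=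
  {X | ∃ t : ℝ, ∃ z ∈ Z, ∃ c : ℝ, X = hIImat (t • A0) (t • z0 + z) c}

/-- the space of `z ∈ ℝ⁴` supported on the index set `s` -/
def nZ (s : Set (Fin 4)) : Set (Fin 4 → ℝ) := {z | ∀ l, l ∉ s → z l = 0}

abbrev Poly2 := MvPolynomial (Fin 2) ℝ
def Px : Poly2 := MvPolynomial.X 0
def Py : Poly2 := MvPolynomial.X 1

/-- the `GL(2,ℝ)`-action `(A·p)(x,y) = p((x,y)A)` on polynomials -/
def polyAct (A : M2) (p : Poly2) : Poly2 :=
  MvPolynomial.aeval (fun i => A 0 i • Px + A 1 i • Py) p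

/-- projective equivalence of polynomials -/
def ProjEquiv (p q : Poly2) : Prop :=
  ∃ A : M2, IsUnit A ∧ ∃ c : ℝ, c ≠ 0 ∧ polyAct A p = c • q

lemma mulVec_stdB (X : M7) (j i : Fin 7) : X.mulVec (stdB j) i = X i j := by
  simp [stdB, Matrix.mulVec_single]
lemma mulVec_single1 (X : M7) (j i : Fin 7) : X.mulVec (Pi.single j 1) i = X i j := by
  simp [Matrix.mulVec_single]
lemma mulVec_apply (X : M7) (u : V7) (i : Fin 7) : X.mulVec u i =
    X i 0 * u 0 + X i 1 * u 1 + X i 2 * u 2 + X i 3 * u 3 + X i 4 * u 4 + X i 5 * u 5 + X i 6 * u 6 := by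
  simp [Matrix.mulVec, dotProduct, Fin.sum_univ_seven]
set_option maxRecDepth 10000 in
set_option maxHeartbeats 4000000 in
lemma g2_skew (X : M7) (hX : inG2 X) : ∀ u v : V7,
    bform (X.mulVec u) v + bform u (X.mulVec v) = 0 := by
  have hs : Real.sqrt 2 * Real.sqrt 2 = 2 := Real.mul_self_sqrt (by norm_num)
  have E012 : Real.sqrt 2 * X 4 0 = (0:ℝ) := by
    have t := hX (stdB 0) (stdB 1) (stdB 2)
    simp only [omega0, wedge3, stdB, mulVec_stdB, mulVec_single1, Pi.single_apply,
      Fin.reduceEq, reduceIte, mul_zero, zero_mul, mul_one, one_mul, sub_zero,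
      zero_sub, add_zero, zero_add, neg_zero] at t
    linear_combination t
  have E013 : -1 * X 4 1 + -1 * X 5 0 = (0:ℝ) := by
    have t := hX (stdB 0) (stdB 1) (stdB 3)
    simp only [omega0, wedge3, stdB, mulVec_stdB, mulVec_single1, Pi.single_apply,
      Fin.reduceEq, reduceIte, mul_zero, zero_mul, mul_one, one_mul, sub_zero,
      zero_sub, add_zero, zero_add, neg_zero] at t
    linear_combination t
  have E014 : -1 * Real.sqrt 2 * X 2 0 + 1 * X 3 1 = (0:ℝ) := by
    have t := hX (stdB 0) (stdB 1) (stdB 4)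
    simp only [omega0, wedge3, stdB, mulVec_stdB, mulVec_single1, Pi.single_apply,
      Fin.reduceEq, reduceIte, mul_zero, zero_mul, mul_one, one_mul, sub_zero,
      zero_sub, add_zero, zero_add, neg_zero] at t
    linear_combination t
  have E015 : 1 * X 3 0 + -1 * Real.sqrt 2 * X 6 1 = (0:ℝ) := by
    have t := hX (stdB 0) (stdB 1) (stdB 5)
    simp only [omega0, wedge3, stdB, mulVec_stdB, mulVec_single1, Pi.single_apply,
      Fin.reduceEq, reduceIte, mul_zero, zero_mul, mul_one, one_mul, sub_zero,
      zero_sub, add_zero, zero_add, neg_zero] at t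
    linear_combination t
  have E016 : Real.sqrt 2 * X 5 1 = (0:ℝ) := by
    have t := hX (stdB 0) (stdB 1) (stdB 6)
    simp only [omega0, wedge3, stdB, mulVec_stdB, mulVec_single1, Pi.single_apply,
      Fin.reduceEq, reduceIte, mul_zero, zero_mul, mul_one, one_mul, sub_zero,
      zero_sub, add_zero, zero_add, neg_zero] at t
    linear_combination t
  have E023 : -1 * X 4 2 + -1 * X 6 0 = (0:ℝ) := by
    have t := hX (stdB 0) (stdB 2) (stdB 3)
    simp only [omega0, wedge3, stdB, mulVec_stdB, mulVec_single1, Pi.single_apply,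
      Fin.reduceEq, reduceIte, mul_zero, zero_mul, mul_one, one_mul, sub_zero,
      zero_sub, add_zero, zero_add, neg_zero] at t
    linear_combination t
  have E024 : Real.sqrt 2 * X 1 0 + 1 * X 3 2 = (0:ℝ) := by
    have t := hX (stdB 0) (stdB 2) (stdB 4)
    simp only [omega0, wedge3, stdB, mulVec_stdB, mulVec_single1, Pi.single_apply,
      Fin.reduceEq, reduceIte, mul_zero, zero_mul, mul_one, one_mul, sub_zero,
      zero_sub, add_zero, zero_add, neg_zero] at t
    linear_combination t
  have E025 : -1 * Real.sqrt 2 * X 6 2 = (0:ℝ) := by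
    have t := hX (stdB 0) (stdB 2) (stdB 5)
    simp only [omega0, wedge3, stdB, mulVec_stdB, mulVec_single1, Pi.single_apply,
      Fin.reduceEq, reduceIte, mul_zero, zero_mul, mul_one, one_mul, sub_zero,
      zero_sub, add_zero, zero_add, neg_zero] at t
    linear_combination t
  have E026 : 1 * X 3 0 + Real.sqrt 2 * X 5 2 = (0:ℝ) := by
    have t := hX (stdB 0) (stdB 2) (stdB 6)
    simp only [omega0, wedge3, stdB, mulVec_stdB, mulVec_single1, Pi.single_apply,
      Fin.reduceEq, reduceIte, mul_zero, zero_mul, mul_one, one_mul, sub_zero,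
      zero_sub, add_zero, zero_add, neg_zero] at t
    linear_combination t
  have E034 : 1 * X 0 0 + 1 * X 3 3 + 1 * X 4 4 = (0:ℝ) := by
    have t := hX (stdB 0) (stdB 3) (stdB 4)
    simp only [omega0, wedge3, stdB, mulVec_stdB, mulVec_single1, Pi.single_apply,
      Fin.reduceEq, reduceIte, mul_zero, zero_mul, mul_one, one_mul, sub_zero,
      zero_sub, add_zero, zero_add, neg_zero] at t
    linear_combination t
  have E035 : -1 * X 1 0 + 1 * X 4 5 + -1 * Real.sqrt 2 * X 6 3 = (0:ℝ) := by
    have t := hX (stdB 0) (stdB 3) (stdB 5)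
    simp only [omega0, wedge3, stdB, mulVec_stdB, mulVec_single1, Pi.single_apply,
      Fin.reduceEq, reduceIte, mul_zero, zero_mul, mul_one, one_mul, sub_zero,
      zero_sub, add_zero, zero_add, neg_zero] at t
    linear_combination t
  have E036 : -1 * X 2 0 + 1 * X 4 6 + Real.sqrt 2 * X 5 3 = (0:ℝ) := by
    have t := hX (stdB 0) (stdB 3) (stdB 6)
    simp only [omega0, wedge3, stdB, mulVec_stdB, mulVec_single1, Pi.single_apply,
      Fin.reduceEq, reduceIte, mul_zero, zero_mul, mul_one, one_mul, sub_zero,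
      zero_sub, add_zero, zero_add, neg_zero] at t
    linear_combination t
  have E045 : -1 * X 3 5 + -1 * Real.sqrt 2 * X 6 4 = (0:ℝ) := by
    have t := hX (stdB 0) (stdB 4) (stdB 5)
    simp only [omega0, wedge3, stdB, mulVec_stdB, mulVec_single1, Pi.single_apply,
      Fin.reduceEq, reduceIte, mul_zero, zero_mul, mul_one, one_mul, sub_zero,
      zero_sub, add_zero, zero_add, neg_zero] at t
    linear_combination t
  have E046 : -1 * X 3 6 + Real.sqrt 2 * X 5 4 = (0:ℝ) := by
    have t := hX (stdB 0) (stdB 4) (stdB 6)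
    simp only [omega0, wedge3, stdB, mulVec_stdB, mulVec_single1, Pi.single_apply,
      Fin.reduceEq, reduceIte, mul_zero, zero_mul, mul_one, one_mul, sub_zero,
      zero_sub, add_zero, zero_add, neg_zero] at t
    linear_combination t
  have E056 : Real.sqrt 2 * X 0 0 + Real.sqrt 2 * X 5 5 + Real.sqrt 2 * X 6 6 = (0:ℝ) := by
    have t := hX (stdB 0) (stdB 5) (stdB 6)
    simp only [omega0, wedge3, stdB, mulVec_stdB, mulVec_single1, Pi.single_apply,
      Fin.reduceEq, reduceIte, mul_zero, zero_mul, mul_one, one_mul, sub_zero,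
      zero_sub, add_zero, zero_add, neg_zero] at t
    linear_combination t
  have E123 : Real.sqrt 2 * X 4 3 + 1 * X 5 2 + -1 * X 6 1 = (0:ℝ) := by
    have t := hX (stdB 1) (stdB 2) (stdB 3)
    simp only [omega0, wedge3, stdB, mulVec_stdB, mulVec_single1, Pi.single_apply,
      Fin.reduceEq, reduceIte, mul_zero, zero_mul, mul_one, one_mul, sub_zero,
      zero_sub, add_zero, zero_add, neg_zero] at t
    linear_combination t
  have E124 : Real.sqrt 2 * X 1 1 + Real.sqrt 2 * X 2 2 + Real.sqrt 2 * X 4 4 = (0:ℝ) := by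
    have t := hX (stdB 1) (stdB 2) (stdB 4)
    simp only [omega0, wedge3, stdB, mulVec_stdB, mulVec_single1, Pi.single_apply,
      Fin.reduceEq, reduceIte, mul_zero, zero_mul, mul_one, one_mul, sub_zero,
      zero_sub, add_zero, zero_add, neg_zero] at t
    linear_combination t
  have E125 : -1 * X 3 2 + Real.sqrt 2 * X 4 5 = (0:ℝ) := by
    have t := hX (stdB 1) (stdB 2) (stdB 5)
    simp only [omega0, wedge3, stdB, mulVec_stdB, mulVec_single1, Pi.single_apply,
      Fin.reduceEq, reduceIte, mul_zero, zero_mul, mul_one, one_mul, sub_zero,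
      zero_sub, add_zero, zero_add, neg_zero] at t
    linear_combination t
  have E126 : 1 * X 3 1 + Real.sqrt 2 * X 4 6 = (0:ℝ) := by
    have t := hX (stdB 1) (stdB 2) (stdB 6)
    simp only [omega0, wedge3, stdB, mulVec_stdB, mulVec_single1, Pi.single_apply,
      Fin.reduceEq, reduceIte, mul_zero, zero_mul, mul_one, one_mul, sub_zero,
      zero_sub, add_zero, zero_add, neg_zero] at t
    linear_combination t
  have E134 : 1 * X 0 1 + Real.sqrt 2 * X 2 3 + -1 * X 5 4 = (0:ℝ) := by
    have t := hX (stdB 1) (stdB 3) (stdB 4)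
    simp only [omega0, wedge3, stdB, mulVec_stdB, mulVec_single1, Pi.single_apply,
      Fin.reduceEq, reduceIte, mul_zero, zero_mul, mul_one, one_mul, sub_zero,
      zero_sub, add_zero, zero_add, neg_zero] at t
    linear_combination t
  have E135 : -1 * X 1 1 + -1 * X 3 3 + -1 * X 5 5 = (0:ℝ) := by
    have t := hX (stdB 1) (stdB 3) (stdB 5)
    simp only [omega0, wedge3, stdB, mulVec_stdB, mulVec_single1, Pi.single_apply,
      Fin.reduceEq, reduceIte, mul_zero, zero_mul, mul_one, one_mul, sub_zero,
      zero_sub, add_zero, zero_add, neg_zero] at t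
    linear_combination t
  have E136 : -1 * X 2 1 + -1 * X 5 6 = (0:ℝ) := by
    have t := hX (stdB 1) (stdB 3) (stdB 6)
    simp only [omega0, wedge3, stdB, mulVec_stdB, mulVec_single1, Pi.single_apply,
      Fin.reduceEq, reduceIte, mul_zero, zero_mul, mul_one, one_mul, sub_zero,
      zero_sub, add_zero, zero_add, neg_zero] at t
    linear_combination t
  have E145 : -1 * Real.sqrt 2 * X 2 5 + -1 * X 3 4 = (0:ℝ) := by
    have t := hX (stdB 1) (stdB 4) (stdB 5)
    simp only [omega0, wedge3, stdB, mulVec_stdB, mulVec_single1, Pi.single_apply,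
      Fin.reduceEq, reduceIte, mul_zero, zero_mul, mul_one, one_mul, sub_zero,
      zero_sub, add_zero, zero_add, neg_zero] at t
    linear_combination t
  have E146 : -1 * Real.sqrt 2 * X 2 6 = (0:ℝ) := by
    have t := hX (stdB 1) (stdB 4) (stdB 6)
    simp only [omega0, wedge3, stdB, mulVec_stdB, mulVec_single1, Pi.single_apply,
      Fin.reduceEq, reduceIte, mul_zero, zero_mul, mul_one, one_mul, sub_zero,
      zero_sub, add_zero, zero_add, neg_zero] at t
    linear_combination t
  have E156 : Real.sqrt 2 * X 0 1 + 1 * X 3 6 = (0:ℝ) := by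
    have t := hX (stdB 1) (stdB 5) (stdB 6)
    simp only [omega0, wedge3, stdB, mulVec_stdB, mulVec_single1, Pi.single_apply,
      Fin.reduceEq, reduceIte, mul_zero, zero_mul, mul_one, one_mul, sub_zero,
      zero_sub, add_zero, zero_add, neg_zero] at t
    linear_combination t
  have E234 : 1 * X 0 2 + -1 * Real.sqrt 2 * X 1 3 + -1 * X 6 4 = (0:ℝ) := by
    have t := hX (stdB 2) (stdB 3) (stdB 4)
    simp only [omega0, wedge3, stdB, mulVec_stdB, mulVec_single1, Pi.single_apply,
      Fin.reduceEq, reduceIte, mul_zero, zero_mul, mul_one, one_mul, sub_zero,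
      zero_sub, add_zero, zero_add, neg_zero] at t
    linear_combination t
  have E235 : -1 * X 1 2 + -1 * X 6 5 = (0:ℝ) := by
    have t := hX (stdB 2) (stdB 3) (stdB 5)
    simp only [omega0, wedge3, stdB, mulVec_stdB, mulVec_single1, Pi.single_apply,
      Fin.reduceEq, reduceIte, mul_zero, zero_mul, mul_one, one_mul, sub_zero,
      zero_sub, add_zero, zero_add, neg_zero] at t
    linear_combination t
  have E236 : -1 * X 2 2 + -1 * X 3 3 + -1 * X 6 6 = (0:ℝ) := by
    have t := hX (stdB 2) (stdB 3) (stdB 6)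
    simp only [omega0, wedge3, stdB, mulVec_stdB, mulVec_single1, Pi.single_apply,
      Fin.reduceEq, reduceIte, mul_zero, zero_mul, mul_one, one_mul, sub_zero,
      zero_sub, add_zero, zero_add, neg_zero] at t
    linear_combination t
  have E245 : Real.sqrt 2 * X 1 5 = (0:ℝ) := by
    have t := hX (stdB 2) (stdB 4) (stdB 5)
    simp only [omega0, wedge3, stdB, mulVec_stdB, mulVec_single1, Pi.single_apply,
      Fin.reduceEq, reduceIte, mul_zero, zero_mul, mul_one, one_mul, sub_zero,
      zero_sub, add_zero, zero_add, neg_zero] at t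
    linear_combination t
  have E246 : Real.sqrt 2 * X 1 6 + -1 * X 3 4 = (0:ℝ) := by
    have t := hX (stdB 2) (stdB 4) (stdB 6)
    simp only [omega0, wedge3, stdB, mulVec_stdB, mulVec_single1, Pi.single_apply,
      Fin.reduceEq, reduceIte, mul_zero, zero_mul, mul_one, one_mul, sub_zero,
      zero_sub, add_zero, zero_add, neg_zero] at t
    linear_combination t
  have E256 : Real.sqrt 2 * X 0 2 + -1 * X 3 5 = (0:ℝ) := by
    have t := hX (stdB 2) (stdB 5) (stdB 6)
    simp only [omega0, wedge3, stdB, mulVec_stdB, mulVec_single1, Pi.single_apply,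
      Fin.reduceEq, reduceIte, mul_zero, zero_mul, mul_one, one_mul, sub_zero,
      zero_sub, add_zero, zero_add, neg_zero] at t
    linear_combination t
  have E345 : 1 * X 0 5 + 1 * X 1 4 = (0:ℝ) := by
    have t := hX (stdB 3) (stdB 4) (stdB 5)
    simp only [omega0, wedge3, stdB, mulVec_stdB, mulVec_single1, Pi.single_apply,
      Fin.reduceEq, reduceIte, mul_zero, zero_mul, mul_one, one_mul, sub_zero,
      zero_sub, add_zero, zero_add, neg_zero] at t
    linear_combination t
  have E346 : 1 * X 0 6 + 1 * X 2 4 = (0:ℝ) := by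
    have t := hX (stdB 3) (stdB 4) (stdB 6)
    simp only [omega0, wedge3, stdB, mulVec_stdB, mulVec_single1, Pi.single_apply,
      Fin.reduceEq, reduceIte, mul_zero, zero_mul, mul_one, one_mul, sub_zero,
      zero_sub, add_zero, zero_add, neg_zero] at t
    linear_combination t
  have E356 : Real.sqrt 2 * X 0 3 + -1 * X 1 6 + 1 * X 2 5 = (0:ℝ) := by
    have t := hX (stdB 3) (stdB 5) (stdB 6)
    simp only [omega0, wedge3, stdB, mulVec_stdB, mulVec_single1, Pi.single_apply,
      Fin.reduceEq, reduceIte, mul_zero, zero_mul, mul_one, one_mul, sub_zero,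
      zero_sub, add_zero, zero_add, neg_zero] at t
    linear_combination t
  have E456 : Real.sqrt 2 * X 0 4 = (0:ℝ) := by
    have t := hX (stdB 4) (stdB 5) (stdB 6)
    simp only [omega0, wedge3, stdB, mulVec_stdB, mulVec_single1, Pi.single_apply,
      Fin.reduceEq, reduceIte, mul_zero, zero_mul, mul_one, one_mul, sub_zero,
      zero_sub, add_zero, zero_add, neg_zero] at t
    linear_combination t
  intro u v
  simp only [bform, mulVec_apply]
  linear_combination
    (u 0 * v 0) * (Real.sqrt 2 * E012 + (-1 * X 4 0) * hs) +
    (u 0 * v 1 + u 1 * v 0) * (-1 * E013) +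
    (u 0 * v 2 + u 2 * v 0) * (-1 * E023) +
    (u 0 * v 3 + u 3 * v 0) * ((-1/2) * E015 + (-1/2) * E026 + (1/2) * Real.sqrt 2 * E123 + ((-1/2) * X 4 3) * hs) +
    (u 0 * v 4 + u 4 * v 0) * ((2/3) * E034 + (1/6) * Real.sqrt 2 * E056 + (1/6) * Real.sqrt 2 * E124 + (1/3) * E135 + (1/3) * E236 + ((-1/6) * X 0 0 + (-1/6) * X 4 4 + (-1/6) * X 5 5 + (-1/6) * X 6 6 + (-1/6) * X 1 1 + (-1/6) * X 2 2) * hs) +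
    (u 0 * v 5 + u 5 * v 0) * ((1/2) * Real.sqrt 2 * E024 + (1/2) * Real.sqrt 2 * E125 + ((-1/2) * X 1 0 + (-1/2) * X 4 5) * hs) +
    (u 0 * v 6 + u 6 * v 0) * ((-1/2) * Real.sqrt 2 * E014 + (1/2) * Real.sqrt 2 * E126 + ((-1/2) * X 2 0 + (-1/2) * X 4 6) * hs) +
    (u 1 * v 1) * (Real.sqrt 2 * E016 + (-1 * X 5 1) * hs) +
    (u 1 * v 2 + u 2 * v 1) * ((-1/2) * Real.sqrt 2 * E015 + (1/2) * Real.sqrt 2 * E026 + ((-1/2) * X 6 1 + (-1/2) * X 5 2) * hs) +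
    (u 1 * v 3 + u 3 * v 1) * ((-1/2) * E014 + (1/2) * Real.sqrt 2 * E036 + (-1/2) * E126 + ((-1/2) * X 5 3) * hs) +
    (u 1 * v 4 + u 4 * v 1) * ((1/2) * Real.sqrt 2 * E046 + (1/2) * Real.sqrt 2 * E156 + ((-1/2) * X 5 4 + (-1/2) * X 0 1) * hs) +
    (u 1 * v 5 + u 5 * v 1) * ((-1/3) * E034 + (1/6) * Real.sqrt 2 * E056 + (1/6) * Real.sqrt 2 * E124 + (-2/3) * E135 + (1/3) * E236 + ((-1/6) * X 0 0 + (-1/6) * X 4 4 + (-1/6) * X 5 5 + (-1/6) * X 6 6 + (-1/6) * X 1 1 + (-1/6) * X 2 2) * hs) +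
    (u 1 * v 6 + u 6 * v 1) * (-1 * E136) +
    (u 2 * v 2) * (-1 * Real.sqrt 2 * E025 + (-1 * X 6 2) * hs) +
    (u 2 * v 3 + u 3 * v 2) * ((-1/2) * E024 + (-1/2) * Real.sqrt 2 * E035 + (1/2) * E125 + ((-1/2) * X 6 3) * hs) +
    (u 2 * v 4 + u 4 * v 2) * ((-1/2) * Real.sqrt 2 * E045 + (1/2) * Real.sqrt 2 * E256 + ((-1/2) * X 6 4 + (-1/2) * X 0 2) * hs) +
    (u 2 * v 5 + u 5 * v 2) * (-1 * E235) +
    (u 2 * v 6 + u 6 * v 2) * ((-1/3) * E034 + (1/6) * Real.sqrt 2 * E056 + (1/6) * Real.sqrt 2 * E124 + (1/3) * E135 + (-2/3) * E236 + ((-1/6) * X 0 0 + (-1/6) * X 4 4 + (-1/6) * X 5 5 + (-1/6) * X 6 6 + (-1/6) * X 1 1 + (-1/6) * X 2 2) * hs) +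
    (u 3 * v 3) * ((-2/3) * E034 + (1/3) * Real.sqrt 2 * E056 + (1/3) * Real.sqrt 2 * E124 + (2/3) * E135 + (2/3) * E236 + ((-1/3) * X 0 0 + (-1/3) * X 4 4 + (-1/3) * X 5 5 + (-1/3) * X 6 6 + (-1/3) * X 1 1 + (-1/3) * X 2 2) * hs) +
    (u 3 * v 4 + u 4 * v 3) * ((1/2) * E145 + (1/2) * E246 + (1/2) * Real.sqrt 2 * E356 + ((-1/2) * X 0 3) * hs) +
    (u 3 * v 5 + u 5 * v 3) * ((1/2) * E045 + (-1/2) * Real.sqrt 2 * E234 + (1/2) * E256 + ((-1/2) * X 1 3) * hs) +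
    (u 3 * v 6 + u 6 * v 3) * ((1/2) * E046 + (1/2) * Real.sqrt 2 * E134 + (-1/2) * E156 + ((-1/2) * X 2 3) * hs) +
    (u 4 * v 4) * (Real.sqrt 2 * E456 + (-1 * X 0 4) * hs) +
    (u 4 * v 5 + u 5 * v 4) * (1 * E345) +
    (u 4 * v 6 + u 6 * v 4) * (1 * E346) +
    (u 5 * v 5) * (Real.sqrt 2 * E245 + (-1 * X 1 5) * hs) +
    (u 5 * v 6 + u 6 * v 5) * ((-1/2) * Real.sqrt 2 * E145 + (1/2) * Real.sqrt 2 * E246 + ((-1/2) * X 2 5 + (-1/2) * X 1 6) * hs) +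
    (u 6 * v 6) * (-1 * Real.sqrt 2 * E146 + (-1 * X 2 6) * hs)
lemma bform_symm (x y : V7) : bform x y = bform y x := by simp [bform]; ring

lemma bform_add_left (x y z : V7) : bform (x + y) z = bform x z + bform y z := by
  simp [bform]; ring

lemma bform_smul_left (c : ℝ) (x z : V7) : bform (c • x) z = c * bform x z := by
  simp [bform]; ring

lemma bform_add_right (x y z : V7) : bform x (y + z) = bform x y + bform x z := by
  simp [bform]; ring

lemma bform_smul_right (c : ℝ) (x z : V7) : bform x (c • z) = c * bform x z := by
  simp [bform]; ring

def Bf : V7 →ₗ[ℝ] V7 →ₗ[ℝ] ℝ :=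
  LinearMap.mk₂ ℝ bform bform_add_left bform_smul_left bform_add_right bform_smul_right

def orthoL (W : Submodule ℝ V7) : Submodule ℝ V7 where
  carrier := {x | ∀ w ∈ W, bform x w = 0}
  zero_mem' := fun w _ => by simp [bform]
  add_mem' := fun {a b} ha hb w hw => by
    rw [bform_add_left, ha w hw, hb w hw, add_zero]
  smul_mem' := fun c x hx w hw => by
    rw [bform_smul_left, hx w hw, mul_zero]

lemma mem_orthoL {W : Submodule ℝ V7} {x : V7} :
    x ∈ orthoL W ↔ ∀ w ∈ W, bform x w = 0 := Iff.rfl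

lemma invInf_my (h : LieSubalgebra ℝ M7) {U W : Submodule ℝ V7}
    (hU : InvariantUnder h U) (hW : InvariantUnder h W) :
    InvariantUnder h (U ⊓ W) :=
  fun X hX v hv => ⟨hU X hX v hv.1, hW X hX v hv.2⟩

lemma invSup_my (h : LieSubalgebra ℝ M7) {U W : Submodule ℝ V7}
    (hU : InvariantUnder h U) (hW : InvariantUnder h W) :
    InvariantUnder h (U ⊔ W) := by
  intro X hX v hv
  rcases Submodule.mem_sup.1 hv with ⟨a, ha, b, hb, rfl⟩
  rw [Matrix.mulVec_add]
  exact Submodule.add_mem _ (Submodule.mem_sup_left (hU X hX a ha))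
    (Submodule.mem_sup_right (hW X hX b hb))

lemma invOrtho_my (h : LieSubalgebra ℝ M7) (hg2 : ∀ X ∈ h, inG2 X)
    {W : Submodule ℝ V7} (hW : InvariantUnder h W) :
    InvariantUnder h (orthoL W) := by
  intro X hX x hx w hw
  have hskew := g2_skew X (hg2 X hX) x w
  have h2 : bform x (X.mulVec w) = 0 := hx _ (hW X hX w hw)
  linarith

/-- every irreducible invariant subspace is isotropic -/
lemma irr_isotropic (h : LieSubalgebra ℝ M7) (hg2 : ∀ X ∈ h, inG2 X)
    (hind : IsIndecomposable h)
    (hnotirr : ∃ U : Submodule ℝ V7, InvariantUnder h U ∧ U ≠ ⊥ ∧ U ≠ ⊤)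
    {U : Submodule ℝ V7} (hU : IsIrreducibleSub h U) :
    U ≤ orthoL U := by
  rcases hU with ⟨hUinv, hUne, hUmin⟩
  have hKinv : InvariantUnder h (U ⊓ orthoL U) :=
    invInf_my h hUinv (invOrtho_my h hg2 hUinv)
  rcases hUmin _ hKinv inf_le_left with hK | hK
  · -- K = ⊥ : U nondegenerate, contradiction with indecomposability
    exfalso
    have hUnd : IsNondeg U := by
      intro u hu hall
      have : u ∈ U ⊓ orthoL U := ⟨hu, fun w hw => hall w hw⟩
      rw [hK] at this
      simpa using this
    have hUtop : U ≠ ⊤ := by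
      rintro rfl
      rcases hnotirr with ⟨U0, hU0inv, hU0bot, hU0top⟩
      rcases hUmin U0 hU0inv le_top with h1 | h1
      · exact hU0bot h1
      · exact hU0top h1
    exact hind U hUinv hUne hUtop hUnd
  · intro u hu
    rw [← hK] at hu
    exact hu.2

/-- two irreducible invariant subspaces are orthogonal -/
lemma irr_pairwise (h : LieSubalgebra ℝ M7) (hg2 : ∀ X ∈ h, inG2 X)
    (hind : IsIndecomposable h)
    (hnotirr : ∃ U : Submodule ℝ V7, InvariantUnder h U ∧ U ≠ ⊥ ∧ U ≠ ⊤)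
    {U W : Submodule ℝ V7} (hU : IsIrreducibleSub h U) (hW : IsIrreducibleSub h W) :
    U ≤ orthoL W := by
  have hUiso := irr_isotropic h hg2 hind hnotirr hU
  have hWiso := irr_isotropic h hg2 hind hnotirr hW
  obtain ⟨hUinv, hUne, hUmin⟩ := hU
  obtain ⟨hWinv, hWne, hWmin⟩ := hW
  -- case on U ⊓ orthoL W
  rcases hUmin (U ⊓ orthoL W) (invInf_my h hUinv (invOrtho_my h hg2 hWinv)) inf_le_left
    with hA | hA
  swap
  · rw [← hA]; exact inf_le_right
  rcases hWmin (W ⊓ orthoL U) (invInf_my h hWinv (invOrtho_my h hg2 hUinv)) inf_le_left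
    with hB | hB
  swap
  · intro u hu w hw
    rw [bform_symm]
    have : w ∈ W ⊓ orthoL U := by rw [hB]; exact hw
    exact this.2 u hu
  -- contradiction case
  exfalso
  -- the pairing maps
  have hinj : ∀ (U' W' : Submodule ℝ V7), W' ⊓ orthoL U' = ⊥ →
      Module.finrank ℝ W' ≤ Module.finrank ℝ U' := by
    intro U' W' hker
    let φ : ↥W' →ₗ[ℝ] Module.Dual ℝ ↥U' :=
      ((Bf.comp W'.subtype).flip.comp U'.subtype).flip
    have hφ : Function.Injective φ := by
      rw [← LinearMap.ker_eq_bot, eq_bot_iff]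
      intro w hw
      have hw0 : ∀ u' ∈ U', bform (↑w) u' = 0 := by
        intro u' hu'
        have := DFunLike.congr_fun (LinearMap.mem_ker.1 hw) ⟨u', hu'⟩
        simpa [φ, Bf] using this
      have : (↑w : V7) ∈ W' ⊓ orthoL U' := ⟨w.2, hw0⟩
      rw [hker] at this
      simpa [Submodule.mem_bot] using Subtype.ext (by simpa using this)
    calc Module.finrank ℝ ↥W' ≤ Module.finrank ℝ (Module.Dual ℝ ↥U') :=
          LinearMap.finrank_le_finrank_of_injective hφ
      _ = Module.finrank ℝ ↥U' := Subspace.dual_finrank_eq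
  have hWU : Module.finrank ℝ ↥W ≤ Module.finrank ℝ ↥U := hinj U W hB
  have hUW : Module.finrank ℝ ↥U ≤ Module.finrank ℝ ↥W := hinj W U hA
  have hdim : Module.finrank ℝ ↥U = Module.finrank ℝ ↥W := le_antisymm hUW hWU
  -- U ⊓ W = ⊥
  have hUWbot : U ⊓ W = ⊥ := by
    rw [eq_bot_iff, ← hA]
    intro x hx
    exact ⟨hx.1, fun w' hw' => hWiso hx.2 w' hw'⟩
  -- D = U ⊔ W
  have hDinv : InvariantUnder h (U ⊔ W) := invSup_my h hUinv hWinv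
  have hDne : U ⊔ W ≠ ⊥ := by
    intro hbot
    exact hUne (le_bot_iff.1 (hbot ▸ (le_sup_left : U ≤ U ⊔ W)))
  have hfinD : Module.finrank ℝ ↥(U ⊔ W) = 2 * Module.finrank ℝ ↥U := by
    have := Submodule.finrank_sup_add_finrank_inf_eq U W
    rw [hUWbot, finrank_bot] at this
    omega
  have hDtop : U ⊔ W ≠ ⊤ := by
    intro htop
    have h7 : Module.finrank ℝ V7 = 7 := by
      simp [Module.finrank_pi]
    rw [htop, finrank_top, h7] at hfinD
    omega
  have hDnd : IsNondeg (U ⊔ W) := by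
    intro d hd hall
    rcases Submodule.mem_sup.1 hd with ⟨a, ha, b, hb, rfl⟩
    have ha0 : a = 0 := by
      have : a ∈ U ⊓ orthoL W := by
        refine ⟨ha, fun w' hw' => ?_⟩
        have h1 := hall w' (Submodule.mem_sup_right hw')
        rw [bform_add_left] at h1
        have h2 : bform b w' = 0 := hWiso hb w' hw'
        linarith
      rw [hA] at this; simpa using this
    have hb0 : b = 0 := by
      have : b ∈ W ⊓ orthoL U := by
        refine ⟨hb, fun u' hu' => ?_⟩
        have h1 := hall u' (Submodule.mem_sup_left hu')
        rw [bform_add_left] at h1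
        have h2 : bform a u' = 0 := hUiso ha u' hu'
        linarith
      rw [hB] at this; simpa using this
    rw [ha0, hb0, add_zero]
  exact hind (U ⊔ W) hDinv hDne hDtop hDnd
/-- The socle of an indecomposable, non-irreducible subalgebra
`h ⊆ g₂*` is isotropic. -/
theorem stmt6 (h : LieSubalgebra ℝ M7) (hg2 : ∀ X ∈ h, inG2 X)
    (hind : IsIndecomposable h)
    (hnotirr : ∃ U : Submodule ℝ V7, InvariantUnder h U ∧ U ≠ ⊥ ∧ U ≠ ⊤) :
    IsIsotropic (socleV h) := by
  have key : ∀ U : Submodule ℝ V7, IsIrreducibleSub h U → socleV h ≤ orthoL U := by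
    intro U hU
    apply sSup_le
    intro W hW
    exact irr_pairwise h hg2 hind hnotirr hW hU
  have key2 : socleV h ≤ orthoL (socleV h) := by
    apply sSup_le
    intro U hU
    intro x hx s hs
    rw [bform_symm]
    exact key U hU hs x hx
  intro u hu u' hu'
  exact key2 hu u' hu'
end
end

section
/- Let R ∈ K(h^I), i.e. R : ℝ⁷ × ℝ⁷ → h^I is alternating bilinear and satisfies R(x,y)z + R(y,z)x + R(z,x)y = 0 for all x,y,z. Write R(e_i,e_j) = h(A^{ij}, v^{ij}, u^{ij}, y^{ij}) with A^{ij} ∈ gl(2,ℝ), v^{ij} ∈ ℝ, u^{ij}, y^{ij} ∈ ℝ². Then: (1) R(e₁,e_j) = 0 for all j ≠ 5, and R(e_i,e_j) = 0 for all i,j ∈ {2,3,4}; (2) tr A^{ij} = 0 whenever i < j and (i,j) ∉ {(5,6),(5,7)}; (3) R(e₁,e₅) = h(0, 0, 0, (tr A^{56}, tr A^{57})). -/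
noncomputable section

open scoped Matrix

attribute [local instance 100] LieRing.ofAssociativeRing

lemma hImat_eq (A : M2) (v : ℝ) (u y : Fin 2 → ℝ) :
    hImat A v u y =
    !![A 0 0 + A 1 1, -u 1, u 0, sqrt2 * v, 0, -y 0, -y 1;
       0, A 0 0, A 0 1, sqrt2 * u 0, y 0, 0, v;
       0, A 1 0, A 1 1, sqrt2 * u 1, y 1, -v, 0;
       0, 0, 0, 0, sqrt2 * v, sqrt2 * u 0, sqrt2 * u 1;
       0, 0, 0, 0, -(A 0 0 + A 1 1), 0, 0;
       0, 0, 0, 0, u 1, -A 0 0, -A 1 0;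
       0, 0, 0, 0, -u 0, -A 0 1, -A 1 1] := by
  rw [hImat, Matrix.trace_fin_two]

lemma hImat_eq_zero {A : M2} {v : ℝ} {u y : Fin 2 → ℝ}
    (h1 : A 0 0 = 0) (h2 : A 0 1 = 0) (h3 : A 1 0 = 0) (h4 : A 1 1 = 0)
    (h5 : v = 0) (h6 : u 0 = 0) (h7 : u 1 = 0) (h8 : y 0 = 0) (h9 : y 1 = 0) :
    hImat A v u y = 0 := by
  rw [hImat, Matrix.trace_fin_two, h1, h2, h3, h4, h5, h6, h7, h8, h9]
  ext i j
  fin_cases i <;> fin_cases j <;> norm_num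

lemma hImat_congr {A B : M2} {v w : ℝ} {u u' y y' : Fin 2 → ℝ}
    (hA : ∀ i j, A i j = B i j) (hv : v = w) (hu : ∀ i, u i = u' i)
    (hy : ∀ i, y i = y' i) : hImat A v u y = hImat B w u' y' := by
  have hA' : A = B := by ext i j; exact hA i j
  rw [hA', hv, funext hu, funext hy]

set_option maxHeartbeats 2000000 in
/-- Lemma 2.6: properties of curvature maps with values in `h^I`.
(Indices are 0-based: `e₁,…,e₇` of the paper are `stdB 0,…,stdB 6`.) -/
theorem stmt10 (R : V7 →ₗ[ℝ] V7 →ₗ[ℝ] M7) (hR : R ∈ curvSet hIset) :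
    (∀ j : Fin 7, j ≠ 4 → R (stdB 0) (stdB j) = 0) ∧
    (∀ i j : Fin 7, i ∈ ({1, 2, 3} : Set (Fin 7)) → j ∈ ({1, 2, 3} : Set (Fin 7)) →
      R (stdB i) (stdB j) = 0) ∧
    (∀ (i j : Fin 7) (A : M2) (v : ℝ) (u y : Fin 2 → ℝ), i < j →
      (i, j) ≠ ((4 : Fin 7), (5 : Fin 7)) → (i, j) ≠ ((4 : Fin 7), (6 : Fin 7)) →
      R (stdB i) (stdB j) = hImat A v u y → A.trace = 0) ∧
    (∀ (A56 : M2) (v56 : ℝ) (u56 y56 : Fin 2 → ℝ)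
       (A57 : M2) (v57 : ℝ) (u57 y57 : Fin 2 → ℝ),
      R (stdB 4) (stdB 5) = hImat A56 v56 u56 y56 →
      R (stdB 4) (stdB 6) = hImat A57 v57 u57 y57 →
      R (stdB 0) (stdB 4) = hImat 0 0 0 ![A56.trace, A57.trace]) := by
  obtain ⟨hAlt, hMem, hBianchi⟩ := hR
  have hs : sqrt2 * sqrt2 = 2 := Real.mul_self_sqrt (by norm_num)
  have skew : ∀ x y : V7, R y x = - R x y := by
    intro x y
    have h0 := hAlt (x + y)
    simp only [map_add, LinearMap.add_apply, hAlt x, hAlt y, zero_add, add_zero] at h0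
    exact eq_neg_of_add_eq_zero_left h0
  have key : ∀ i j k r : Fin 7,
      R (stdB i) (stdB j) r k + R (stdB j) (stdB k) r i + R (stdB k) (stdB i) r j = 0 := by
    intro i j k r
    have H := congrFun (hBianchi (stdB i) (stdB j) (stdB k)) r
    simpa [stdB, Matrix.mulVec_single] using H
  obtain ⟨A01, v01, u01, y01, h01⟩ := hMem (stdB 0) (stdB 1)
  have h01' := h01.trans (hImat_eq A01 v01 u01 y01)
  obtain ⟨A02, v02, u02, y02, h02⟩ := hMem (stdB 0) (stdB 2)
  have h02' := h02.trans (hImat_eq A02 v02 u02 y02)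
  obtain ⟨A03, v03, u03, y03, h03⟩ := hMem (stdB 0) (stdB 3)
  have h03' := h03.trans (hImat_eq A03 v03 u03 y03)
  obtain ⟨A04, v04, u04, y04, h04⟩ := hMem (stdB 0) (stdB 4)
  have h04' := h04.trans (hImat_eq A04 v04 u04 y04)
  obtain ⟨A05, v05, u05, y05, h05⟩ := hMem (stdB 0) (stdB 5)
  have h05' := h05.trans (hImat_eq A05 v05 u05 y05)
  obtain ⟨A06, v06, u06, y06, h06⟩ := hMem (stdB 0) (stdB 6)
  have h06' := h06.trans (hImat_eq A06 v06 u06 y06)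
  obtain ⟨A12, v12, u12, y12, h12⟩ := hMem (stdB 1) (stdB 2)
  have h12' := h12.trans (hImat_eq A12 v12 u12 y12)
  obtain ⟨A13, v13, u13, y13, h13⟩ := hMem (stdB 1) (stdB 3)
  have h13' := h13.trans (hImat_eq A13 v13 u13 y13)
  obtain ⟨A14, v14, u14, y14, h14⟩ := hMem (stdB 1) (stdB 4)
  have h14' := h14.trans (hImat_eq A14 v14 u14 y14)
  obtain ⟨A15, v15, u15, y15, h15⟩ := hMem (stdB 1) (stdB 5)
  have h15' := h15.trans (hImat_eq A15 v15 u15 y15)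
  obtain ⟨A16, v16, u16, y16, h16⟩ := hMem (stdB 1) (stdB 6)
  have h16' := h16.trans (hImat_eq A16 v16 u16 y16)
  obtain ⟨A23, v23, u23, y23, h23⟩ := hMem (stdB 2) (stdB 3)
  have h23' := h23.trans (hImat_eq A23 v23 u23 y23)
  obtain ⟨A24, v24, u24, y24, h24⟩ := hMem (stdB 2) (stdB 4)
  have h24' := h24.trans (hImat_eq A24 v24 u24 y24)
  obtain ⟨A25, v25, u25, y25, h25⟩ := hMem (stdB 2) (stdB 5)
  have h25' := h25.trans (hImat_eq A25 v25 u25 y25)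
  obtain ⟨A26, v26, u26, y26, h26⟩ := hMem (stdB 2) (stdB 6)
  have h26' := h26.trans (hImat_eq A26 v26 u26 y26)
  obtain ⟨A34, v34, u34, y34, h34⟩ := hMem (stdB 3) (stdB 4)
  have h34' := h34.trans (hImat_eq A34 v34 u34 y34)
  obtain ⟨A35, v35, u35, y35, h35⟩ := hMem (stdB 3) (stdB 5)
  have h35' := h35.trans (hImat_eq A35 v35 u35 y35)
  obtain ⟨A36, v36, u36, y36, h36⟩ := hMem (stdB 3) (stdB 6)
  have h36' := h36.trans (hImat_eq A36 v36 u36 y36)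
  obtain ⟨A45, v45, u45, y45, h45⟩ := hMem (stdB 4) (stdB 5)
  have h45' := h45.trans (hImat_eq A45 v45 u45 y45)
  obtain ⟨A46, v46, u46, y46, h46⟩ := hMem (stdB 4) (stdB 6)
  have h46' := h46.trans (hImat_eq A46 v46 u46 y46)
  obtain ⟨A56, v56, u56, y56, h56⟩ := hMem (stdB 5) (stdB 6)
  have h56' := h56.trans (hImat_eq A56 v56 u56 y56)
  have q_0_1_2_0 : (u01 0) + (A12 0 0 + A12 1 1) + -(-u02 1) = 0 := by
    have t := key 0 1 2 0
    rw [skew (stdB 0) (stdB 2), h01', h12', h02'] at t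
    exact t
  have q_0_1_2_1 : (A01 0 1) + (0) + -(A02 0 0) = 0 := by
    have t := key 0 1 2 1
    rw [skew (stdB 0) (stdB 2), h01', h12', h02'] at t
    exact t
  have q_0_1_2_2 : (A01 1 1) + (0) + -(A02 1 0) = 0 := by
    have t := key 0 1 2 2
    rw [skew (stdB 0) (stdB 2), h01', h12', h02'] at t
    exact t
  have q_0_1_3_0 : (sqrt2 * v01) + (A13 0 0 + A13 1 1) + -(-u03 1) = 0 := by
    have t := key 0 1 3 0
    rw [skew (stdB 0) (stdB 3), h01', h13', h03'] at t
    exact t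
  have q_0_1_3_1 : (sqrt2 * u01 0) + (0) + -(A03 0 0) = 0 := by
    have t := key 0 1 3 1
    rw [skew (stdB 0) (stdB 3), h01', h13', h03'] at t
    exact t
  have q_0_1_3_2 : (sqrt2 * u01 1) + (0) + -(A03 1 0) = 0 := by
    have t := key 0 1 3 2
    rw [skew (stdB 0) (stdB 3), h01', h13', h03'] at t
    exact t
  have q_0_1_4_0 : (0) + (A14 0 0 + A14 1 1) + -(-u04 1) = 0 := by
    have t := key 0 1 4 0
    rw [skew (stdB 0) (stdB 4), h01', h14', h04'] at t
    exact t
  have q_0_1_4_1 : (y01 0) + (0) + -(A04 0 0) = 0 := by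
    have t := key 0 1 4 1
    rw [skew (stdB 0) (stdB 4), h01', h14', h04'] at t
    exact t
  have q_0_1_4_2 : (y01 1) + (0) + -(A04 1 0) = 0 := by
    have t := key 0 1 4 2
    rw [skew (stdB 0) (stdB 4), h01', h14', h04'] at t
    exact t
  have q_0_1_4_3 : (sqrt2 * v01) + (0) + -(0) = 0 := by
    have t := key 0 1 4 3
    rw [skew (stdB 0) (stdB 4), h01', h14', h04'] at t
    exact t
  have q_0_1_4_4 : (-(A01 0 0 + A01 1 1)) + (0) + -(0) = 0 := by
    have t := key 0 1 4 4
    rw [skew (stdB 0) (stdB 4), h01', h14', h04'] at t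
    exact t
  have q_0_1_4_5 : (u01 1) + (0) + -(0) = 0 := by
    have t := key 0 1 4 5
    rw [skew (stdB 0) (stdB 4), h01', h14', h04'] at t
    exact t
  have q_0_1_4_6 : (-u01 0) + (0) + -(0) = 0 := by
    have t := key 0 1 4 6
    rw [skew (stdB 0) (stdB 4), h01', h14', h04'] at t
    exact t
  have q_0_1_5_0 : (-y01 0) + (A15 0 0 + A15 1 1) + -(-u05 1) = 0 := by
    have t := key 0 1 5 0
    rw [skew (stdB 0) (stdB 5), h01', h15', h05'] at t
    exact t
  have q_0_1_5_1 : (0) + (0) + -(A05 0 0) = 0 := by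
    have t := key 0 1 5 1
    rw [skew (stdB 0) (stdB 5), h01', h15', h05'] at t
    exact t
  have q_0_1_5_2 : (-v01) + (0) + -(A05 1 0) = 0 := by
    have t := key 0 1 5 2
    rw [skew (stdB 0) (stdB 5), h01', h15', h05'] at t
    exact t
  have q_0_1_5_5 : (-A01 0 0) + (0) + -(0) = 0 := by
    have t := key 0 1 5 5
    rw [skew (stdB 0) (stdB 5), h01', h15', h05'] at t
    exact t
  have q_0_1_5_6 : (-A01 0 1) + (0) + -(0) = 0 := by
    have t := key 0 1 5 6
    rw [skew (stdB 0) (stdB 5), h01', h15', h05'] at t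
    exact t
  have q_0_1_6_0 : (-y01 1) + (A16 0 0 + A16 1 1) + -(-u06 1) = 0 := by
    have t := key 0 1 6 0
    rw [skew (stdB 0) (stdB 6), h01', h16', h06'] at t
    exact t
  have q_0_1_6_1 : (v01) + (0) + -(A06 0 0) = 0 := by
    have t := key 0 1 6 1
    rw [skew (stdB 0) (stdB 6), h01', h16', h06'] at t
    exact t
  have q_0_1_6_2 : (0) + (0) + -(A06 1 0) = 0 := by
    have t := key 0 1 6 2
    rw [skew (stdB 0) (stdB 6), h01', h16', h06'] at t
    exact t
  have q_0_1_6_5 : (-A01 1 0) + (0) + -(0) = 0 := by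
    have t := key 0 1 6 5
    rw [skew (stdB 0) (stdB 6), h01', h16', h06'] at t
    exact t
  have q_0_2_3_0 : (sqrt2 * v02) + (A23 0 0 + A23 1 1) + -(u03 0) = 0 := by
    have t := key 0 2 3 0
    rw [skew (stdB 0) (stdB 3), h02', h23', h03'] at t
    exact t
  have q_0_2_3_1 : (sqrt2 * u02 0) + (0) + -(A03 0 1) = 0 := by
    have t := key 0 2 3 1
    rw [skew (stdB 0) (stdB 3), h02', h23', h03'] at t
    exact t
  have q_0_2_3_2 : (sqrt2 * u02 1) + (0) + -(A03 1 1) = 0 := by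
    have t := key 0 2 3 2
    rw [skew (stdB 0) (stdB 3), h02', h23', h03'] at t
    exact t
  have q_0_2_4_0 : (0) + (A24 0 0 + A24 1 1) + -(u04 0) = 0 := by
    have t := key 0 2 4 0
    rw [skew (stdB 0) (stdB 4), h02', h24', h04'] at t
    exact t
  have q_0_2_4_1 : (y02 0) + (0) + -(A04 0 1) = 0 := by
    have t := key 0 2 4 1
    rw [skew (stdB 0) (stdB 4), h02', h24', h04'] at t
    exact t
  have q_0_2_4_2 : (y02 1) + (0) + -(A04 1 1) = 0 := by
    have t := key 0 2 4 2
    rw [skew (stdB 0) (stdB 4), h02', h24', h04'] at t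
    exact t
  have q_0_2_4_3 : (sqrt2 * v02) + (0) + -(0) = 0 := by
    have t := key 0 2 4 3
    rw [skew (stdB 0) (stdB 4), h02', h24', h04'] at t
    exact t
  have q_0_2_4_4 : (-(A02 0 0 + A02 1 1)) + (0) + -(0) = 0 := by
    have t := key 0 2 4 4
    rw [skew (stdB 0) (stdB 4), h02', h24', h04'] at t
    exact t
  have q_0_2_4_5 : (u02 1) + (0) + -(0) = 0 := by
    have t := key 0 2 4 5
    rw [skew (stdB 0) (stdB 4), h02', h24', h04'] at t
    exact t
  have q_0_2_4_6 : (-u02 0) + (0) + -(0) = 0 := by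
    have t := key 0 2 4 6
    rw [skew (stdB 0) (stdB 4), h02', h24', h04'] at t
    exact t
  have q_0_2_5_0 : (-y02 0) + (A25 0 0 + A25 1 1) + -(u05 0) = 0 := by
    have t := key 0 2 5 0
    rw [skew (stdB 0) (stdB 5), h02', h25', h05'] at t
    exact t
  have q_0_2_5_1 : (0) + (0) + -(A05 0 1) = 0 := by
    have t := key 0 2 5 1
    rw [skew (stdB 0) (stdB 5), h02', h25', h05'] at t
    exact t
  have q_0_2_5_2 : (-v02) + (0) + -(A05 1 1) = 0 := by
    have t := key 0 2 5 2
    rw [skew (stdB 0) (stdB 5), h02', h25', h05'] at t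
    exact t
  have q_0_2_5_6 : (-A02 0 1) + (0) + -(0) = 0 := by
    have t := key 0 2 5 6
    rw [skew (stdB 0) (stdB 5), h02', h25', h05'] at t
    exact t
  have q_0_2_6_0 : (-y02 1) + (A26 0 0 + A26 1 1) + -(u06 0) = 0 := by
    have t := key 0 2 6 0
    rw [skew (stdB 0) (stdB 6), h02', h26', h06'] at t
    exact t
  have q_0_2_6_1 : (v02) + (0) + -(A06 0 1) = 0 := by
    have t := key 0 2 6 1
    rw [skew (stdB 0) (stdB 6), h02', h26', h06'] at t
    exact t
  have q_0_2_6_2 : (0) + (0) + -(A06 1 1) = 0 := by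
    have t := key 0 2 6 2
    rw [skew (stdB 0) (stdB 6), h02', h26', h06'] at t
    exact t
  have q_0_3_4_0 : (0) + (A34 0 0 + A34 1 1) + -(sqrt2 * v04) = 0 := by
    have t := key 0 3 4 0
    rw [skew (stdB 0) (stdB 4), h03', h34', h04'] at t
    exact t
  have q_0_3_4_1 : (y03 0) + (0) + -(sqrt2 * u04 0) = 0 := by
    have t := key 0 3 4 1
    rw [skew (stdB 0) (stdB 4), h03', h34', h04'] at t
    exact t
  have q_0_3_4_2 : (y03 1) + (0) + -(sqrt2 * u04 1) = 0 := by
    have t := key 0 3 4 2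
    rw [skew (stdB 0) (stdB 4), h03', h34', h04'] at t
    exact t
  have q_0_3_4_3 : (sqrt2 * v03) + (0) + -(0) = 0 := by
    have t := key 0 3 4 3
    rw [skew (stdB 0) (stdB 4), h03', h34', h04'] at t
    exact t
  have q_0_3_4_5 : (u03 1) + (0) + -(0) = 0 := by
    have t := key 0 3 4 5
    rw [skew (stdB 0) (stdB 4), h03', h34', h04'] at t
    exact t
  have q_0_3_4_6 : (-u03 0) + (0) + -(0) = 0 := by
    have t := key 0 3 4 6
    rw [skew (stdB 0) (stdB 4), h03', h34', h04'] at t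
    exact t
  have q_0_3_5_0 : (-y03 0) + (A35 0 0 + A35 1 1) + -(sqrt2 * v05) = 0 := by
    have t := key 0 3 5 0
    rw [skew (stdB 0) (stdB 5), h03', h35', h05'] at t
    exact t
  have q_0_3_5_1 : (0) + (0) + -(sqrt2 * u05 0) = 0 := by
    have t := key 0 3 5 1
    rw [skew (stdB 0) (stdB 5), h03', h35', h05'] at t
    exact t
  have q_0_3_5_2 : (-v03) + (0) + -(sqrt2 * u05 1) = 0 := by
    have t := key 0 3 5 2
    rw [skew (stdB 0) (stdB 5), h03', h35', h05'] at t
    exact t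
  have q_0_3_6_0 : (-y03 1) + (A36 0 0 + A36 1 1) + -(sqrt2 * v06) = 0 := by
    have t := key 0 3 6 0
    rw [skew (stdB 0) (stdB 6), h03', h36', h06'] at t
    exact t
  have q_0_3_6_1 : (v03) + (0) + -(sqrt2 * u06 0) = 0 := by
    have t := key 0 3 6 1
    rw [skew (stdB 0) (stdB 6), h03', h36', h06'] at t
    exact t
  have q_0_3_6_2 : (0) + (0) + -(sqrt2 * u06 1) = 0 := by
    have t := key 0 3 6 2
    rw [skew (stdB 0) (stdB 6), h03', h36', h06'] at t
    exact t
  have q_0_4_5_0 : (-y04 0) + (A45 0 0 + A45 1 1) + -(0) = 0 := by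
    have t := key 0 4 5 0
    rw [skew (stdB 0) (stdB 5), h04', h45', h05'] at t
    exact t
  have q_0_4_5_1 : (0) + (0) + -(y05 0) = 0 := by
    have t := key 0 4 5 1
    rw [skew (stdB 0) (stdB 5), h04', h45', h05'] at t
    exact t
  have q_0_4_5_2 : (-v04) + (0) + -(y05 1) = 0 := by
    have t := key 0 4 5 2
    rw [skew (stdB 0) (stdB 5), h04', h45', h05'] at t
    exact t
  have q_0_4_5_3 : (sqrt2 * u04 0) + (0) + -(sqrt2 * v05) = 0 := by
    have t := key 0 4 5 3
    rw [skew (stdB 0) (stdB 5), h04', h45', h05'] at t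
    exact t
  have q_0_4_5_5 : (-A04 0 0) + (0) + -(u05 1) = 0 := by
    have t := key 0 4 5 5
    rw [skew (stdB 0) (stdB 5), h04', h45', h05'] at t
    exact t
  have q_0_4_5_6 : (-A04 0 1) + (0) + -(-u05 0) = 0 := by
    have t := key 0 4 5 6
    rw [skew (stdB 0) (stdB 5), h04', h45', h05'] at t
    exact t
  have q_0_4_6_0 : (-y04 1) + (A46 0 0 + A46 1 1) + -(0) = 0 := by
    have t := key 0 4 6 0
    rw [skew (stdB 0) (stdB 6), h04', h46', h06'] at t
    exact t
  have q_0_4_6_1 : (v04) + (0) + -(y06 0) = 0 := by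
    have t := key 0 4 6 1
    rw [skew (stdB 0) (stdB 6), h04', h46', h06'] at t
    exact t
  have q_0_4_6_2 : (0) + (0) + -(y06 1) = 0 := by
    have t := key 0 4 6 2
    rw [skew (stdB 0) (stdB 6), h04', h46', h06'] at t
    exact t
  have q_0_4_6_3 : (sqrt2 * u04 1) + (0) + -(sqrt2 * v06) = 0 := by
    have t := key 0 4 6 3
    rw [skew (stdB 0) (stdB 6), h04', h46', h06'] at t
    exact t
  have q_0_4_6_5 : (-A04 1 0) + (0) + -(u06 1) = 0 := by
    have t := key 0 4 6 5
    rw [skew (stdB 0) (stdB 6), h04', h46', h06'] at t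
    exact t
  have q_0_4_6_6 : (-A04 1 1) + (0) + -(-u06 0) = 0 := by
    have t := key 0 4 6 6
    rw [skew (stdB 0) (stdB 6), h04', h46', h06'] at t
    exact t
  have q_0_5_6_0 : (-y05 1) + (A56 0 0 + A56 1 1) + -(-y06 0) = 0 := by
    have t := key 0 5 6 0
    rw [skew (stdB 0) (stdB 6), h05', h56', h06'] at t
    exact t
  have q_0_5_6_1 : (v05) + (0) + -(0) = 0 := by
    have t := key 0 5 6 1
    rw [skew (stdB 0) (stdB 6), h05', h56', h06'] at t
    exact t
  have q_0_5_6_2 : (0) + (0) + -(-v06) = 0 := by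
    have t := key 0 5 6 2
    rw [skew (stdB 0) (stdB 6), h05', h56', h06'] at t
    exact t
  have q_1_2_3_0 : (sqrt2 * v12) + (-u23 1) + -(u13 0) = 0 := by
    have t := key 1 2 3 0
    rw [skew (stdB 1) (stdB 3), h12', h23', h13'] at t
    exact t
  have q_1_2_3_1 : (sqrt2 * u12 0) + (A23 0 0) + -(A13 0 1) = 0 := by
    have t := key 1 2 3 1
    rw [skew (stdB 1) (stdB 3), h12', h23', h13'] at t
    exact t
  have q_1_2_3_2 : (sqrt2 * u12 1) + (A23 1 0) + -(A13 1 1) = 0 := by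
    have t := key 1 2 3 2
    rw [skew (stdB 1) (stdB 3), h12', h23', h13'] at t
    exact t
  have q_1_2_4_0 : (0) + (-u24 1) + -(u14 0) = 0 := by
    have t := key 1 2 4 0
    rw [skew (stdB 1) (stdB 4), h12', h24', h14'] at t
    exact t
  have q_1_2_4_3 : (sqrt2 * v12) + (0) + -(0) = 0 := by
    have t := key 1 2 4 3
    rw [skew (stdB 1) (stdB 4), h12', h24', h14'] at t
    exact t
  have q_1_2_4_5 : (u12 1) + (0) + -(0) = 0 := by
    have t := key 1 2 4 5
    rw [skew (stdB 1) (stdB 4), h12', h24', h14'] at t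
    exact t
  have q_1_2_4_6 : (-u12 0) + (0) + -(0) = 0 := by
    have t := key 1 2 4 6
    rw [skew (stdB 1) (stdB 4), h12', h24', h14'] at t
    exact t
  have q_1_2_5_0 : (-y12 0) + (-u25 1) + -(u15 0) = 0 := by
    have t := key 1 2 5 0
    rw [skew (stdB 1) (stdB 5), h12', h25', h15'] at t
    exact t
  have q_1_2_5_5 : (-A12 0 0) + (0) + -(0) = 0 := by
    have t := key 1 2 5 5
    rw [skew (stdB 1) (stdB 5), h12', h25', h15'] at t
    exact t
  have q_1_2_5_6 : (-A12 0 1) + (0) + -(0) = 0 := by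
    have t := key 1 2 5 6
    rw [skew (stdB 1) (stdB 5), h12', h25', h15'] at t
    exact t
  have q_1_2_6_0 : (-y12 1) + (-u26 1) + -(u16 0) = 0 := by
    have t := key 1 2 6 0
    rw [skew (stdB 1) (stdB 6), h12', h26', h16'] at t
    exact t
  have q_1_2_6_5 : (-A12 1 0) + (0) + -(0) = 0 := by
    have t := key 1 2 6 5
    rw [skew (stdB 1) (stdB 6), h12', h26', h16'] at t
    exact t
  have q_1_3_4_1 : (y13 0) + (A34 0 0) + -(sqrt2 * u14 0) = 0 := by
    have t := key 1 3 4 1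
    rw [skew (stdB 1) (stdB 4), h13', h34', h14'] at t
    exact t
  have q_1_3_4_2 : (y13 1) + (A34 1 0) + -(sqrt2 * u14 1) = 0 := by
    have t := key 1 3 4 2
    rw [skew (stdB 1) (stdB 4), h13', h34', h14'] at t
    exact t
  have q_1_3_4_3 : (sqrt2 * v13) + (0) + -(0) = 0 := by
    have t := key 1 3 4 3
    rw [skew (stdB 1) (stdB 4), h13', h34', h14'] at t
    exact t
  have q_1_3_4_5 : (u13 1) + (0) + -(0) = 0 := by
    have t := key 1 3 4 5
    rw [skew (stdB 1) (stdB 4), h13', h34', h14'] at t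
    exact t
  have q_1_3_4_6 : (-u13 0) + (0) + -(0) = 0 := by
    have t := key 1 3 4 6
    rw [skew (stdB 1) (stdB 4), h13', h34', h14'] at t
    exact t
  have q_1_3_5_0 : (-y13 0) + (-u35 1) + -(sqrt2 * v15) = 0 := by
    have t := key 1 3 5 0
    rw [skew (stdB 1) (stdB 5), h13', h35', h15'] at t
    exact t
  have q_1_3_5_1 : (0) + (A35 0 0) + -(sqrt2 * u15 0) = 0 := by
    have t := key 1 3 5 1
    rw [skew (stdB 1) (stdB 5), h13', h35', h15'] at t
    exact t
  have q_1_3_5_5 : (-A13 0 0) + (0) + -(0) = 0 := by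
    have t := key 1 3 5 5
    rw [skew (stdB 1) (stdB 5), h13', h35', h15'] at t
    exact t
  have q_1_3_5_6 : (-A13 0 1) + (0) + -(0) = 0 := by
    have t := key 1 3 5 6
    rw [skew (stdB 1) (stdB 5), h13', h35', h15'] at t
    exact t
  have q_1_3_6_0 : (-y13 1) + (-u36 1) + -(sqrt2 * v16) = 0 := by
    have t := key 1 3 6 0
    rw [skew (stdB 1) (stdB 6), h13', h36', h16'] at t
    exact t
  have q_1_3_6_1 : (v13) + (A36 0 0) + -(sqrt2 * u16 0) = 0 := by
    have t := key 1 3 6 1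
    rw [skew (stdB 1) (stdB 6), h13', h36', h16'] at t
    exact t
  have q_1_3_6_5 : (-A13 1 0) + (0) + -(0) = 0 := by
    have t := key 1 3 6 5
    rw [skew (stdB 1) (stdB 6), h13', h36', h16'] at t
    exact t
  have q_1_4_5_3 : (sqrt2 * u14 0) + (0) + -(sqrt2 * v15) = 0 := by
    have t := key 1 4 5 3
    rw [skew (stdB 1) (stdB 5), h14', h45', h15'] at t
    exact t
  have q_1_4_6_3 : (sqrt2 * u14 1) + (0) + -(sqrt2 * v16) = 0 := by
    have t := key 1 4 6 3
    rw [skew (stdB 1) (stdB 6), h14', h46', h16'] at t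
    exact t
  have q_1_5_6_1 : (v15) + (A56 0 0) + -(0) = 0 := by
    have t := key 1 5 6 1
    rw [skew (stdB 1) (stdB 6), h15', h56', h16'] at t
    exact t
  have q_2_3_4_1 : (y23 0) + (A34 0 1) + -(sqrt2 * u24 0) = 0 := by
    have t := key 2 3 4 1
    rw [skew (stdB 2) (stdB 4), h23', h34', h24'] at t
    exact t
  have q_2_3_4_2 : (y23 1) + (A34 1 1) + -(sqrt2 * u24 1) = 0 := by
    have t := key 2 3 4 2
    rw [skew (stdB 2) (stdB 4), h23', h34', h24'] at t
    exact t
  have q_2_3_4_3 : (sqrt2 * v23) + (0) + -(0) = 0 := by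
    have t := key 2 3 4 3
    rw [skew (stdB 2) (stdB 4), h23', h34', h24'] at t
    exact t
  have q_2_3_4_6 : (-u23 0) + (0) + -(0) = 0 := by
    have t := key 2 3 4 6
    rw [skew (stdB 2) (stdB 4), h23', h34', h24'] at t
    exact t
  have q_2_3_5_0 : (-y23 0) + (u35 0) + -(sqrt2 * v25) = 0 := by
    have t := key 2 3 5 0
    rw [skew (stdB 2) (stdB 5), h23', h35', h25'] at t
    exact t
  have q_2_3_5_2 : (-v23) + (A35 1 1) + -(sqrt2 * u25 1) = 0 := by
    have t := key 2 3 5 2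
    rw [skew (stdB 2) (stdB 5), h23', h35', h25'] at t
    exact t
  have q_2_3_5_6 : (-A23 0 1) + (0) + -(0) = 0 := by
    have t := key 2 3 5 6
    rw [skew (stdB 2) (stdB 5), h23', h35', h25'] at t
    exact t
  have q_2_3_6_2 : (0) + (A36 1 1) + -(sqrt2 * u26 1) = 0 := by
    have t := key 2 3 6 2
    rw [skew (stdB 2) (stdB 6), h23', h36', h26'] at t
    exact t
  have q_2_4_5_3 : (sqrt2 * u24 0) + (0) + -(sqrt2 * v25) = 0 := by
    have t := key 2 4 5 3
    rw [skew (stdB 2) (stdB 5), h24', h45', h25'] at t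
    exact t
  have q_2_4_6_3 : (sqrt2 * u24 1) + (0) + -(sqrt2 * v26) = 0 := by
    have t := key 2 4 6 3
    rw [skew (stdB 2) (stdB 6), h24', h46', h26'] at t
    exact t
  have q_2_5_6_2 : (0) + (A56 1 1) + -(-v26) = 0 := by
    have t := key 2 5 6 2
    rw [skew (stdB 2) (stdB 6), h25', h56', h26'] at t
    exact t
  have q_3_4_5_5 : (-A34 0 0) + (0) + -(u35 1) = 0 := by
    have t := key 3 4 5 5
    rw [skew (stdB 3) (stdB 5), h34', h45', h35'] at t
    exact t
  have q_3_4_5_6 : (-A34 0 1) + (0) + -(-u35 0) = 0 := by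
    have t := key 3 4 5 6
    rw [skew (stdB 3) (stdB 5), h34', h45', h35'] at t
    exact t
  have q_3_4_6_5 : (-A34 1 0) + (0) + -(u36 1) = 0 := by
    have t := key 3 4 6 5
    rw [skew (stdB 3) (stdB 6), h34', h46', h36'] at t
    exact t
  have z01_a00 : A01 0 0 = 0 := by
    linear_combination (-1 : ℝ) * q_0_1_5_5
  have z01_a01 : A01 0 1 = 0 := by
    linear_combination (-1 : ℝ) * q_0_1_5_6
  have z01_a10 : A01 1 0 = 0 := by
    linear_combination (-1 : ℝ) * q_0_1_6_5
  have z01_a11 : A01 1 1 = 0 := by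
    linear_combination (-1 : ℝ) * q_0_1_4_4 + (1 : ℝ) * q_0_1_5_5
  have z01_v : v01 = 0 := by
    linear_combination (((1 : ℝ)/2) * sqrt2) * q_0_1_4_3 + (((-1 : ℝ)/2) * (v01)) * hs
  have z01_u0 : u01 0 = 0 := by
    linear_combination (-1 : ℝ) * q_0_1_4_6
  have z01_u1 : u01 1 = 0 := by
    linear_combination (1 : ℝ) * q_0_1_4_5
  have z01_y0 : y01 0 = 0 := by
    linear_combination (1 : ℝ) * q_0_1_4_1 + ((1 : ℝ)/2) * q_0_3_4_3 + (((1 : ℝ)/2) * sqrt2) * q_0_3_5_2 + (-1 : ℝ) * q_0_4_5_5 + (((1 : ℝ)/2) * (u05 1)) * hs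
  have z01_y1 : y01 1 = 0 := by
    linear_combination (1 : ℝ) * q_0_1_4_2 + (((1 : ℝ)/2) * sqrt2) * q_0_3_6_2 + (-1 : ℝ) * q_0_4_6_5 + (((1 : ℝ)/2) * (u06 1)) * hs
  have z02_a00 : A02 0 0 = 0 := by
    linear_combination (-1 : ℝ) * q_0_1_2_1 + (-1 : ℝ) * q_0_1_5_6
  have z02_a01 : A02 0 1 = 0 := by
    linear_combination (-1 : ℝ) * q_0_2_5_6
  have z02_a10 : A02 1 0 = 0 := by
    linear_combination (-1 : ℝ) * q_0_1_2_2 + (-1 : ℝ) * q_0_1_4_4 + (1 : ℝ) * q_0_1_5_5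
  have z02_a11 : A02 1 1 = 0 := by
    linear_combination (1 : ℝ) * q_0_1_2_1 + (1 : ℝ) * q_0_1_5_6 + (-1 : ℝ) * q_0_2_4_4
  have z02_v : v02 = 0 := by
    linear_combination (((1 : ℝ)/2) * sqrt2) * q_0_2_4_3 + (((-1 : ℝ)/2) * (v02)) * hs
  have z02_u0 : u02 0 = 0 := by
    linear_combination (-1 : ℝ) * q_0_2_4_6
  have z02_u1 : u02 1 = 0 := by
    linear_combination (1 : ℝ) * q_0_2_4_5
  have z02_y0 : y02 0 = 0 := by
    linear_combination (1 : ℝ) * q_0_2_4_1 + (((-1 : ℝ)/2) * sqrt2) * q_0_3_5_1 + (-1 : ℝ) * q_0_4_5_6 + (((-1 : ℝ)/2) * (u05 0)) * hs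
  have z02_y1 : y02 1 = 0 := by
    linear_combination (1 : ℝ) * q_0_2_4_2 + ((1 : ℝ)/2) * q_0_3_4_3 + (((-1 : ℝ)/2) * sqrt2) * q_0_3_6_1 + (-1 : ℝ) * q_0_4_6_6 + (((-1 : ℝ)/2) * (u06 0)) * hs
  have z03_a00 : A03 0 0 = 0 := by
    linear_combination (-1 : ℝ) * q_0_1_3_1 + ((-1 : ℝ) * sqrt2) * q_0_1_4_6
  have z03_a01 : A03 0 1 = 0 := by
    linear_combination (-1 : ℝ) * q_0_2_3_1 + ((-1 : ℝ) * sqrt2) * q_0_2_4_6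
  have z03_a10 : A03 1 0 = 0 := by
    linear_combination (-1 : ℝ) * q_0_1_3_2 + ((1 : ℝ) * sqrt2) * q_0_1_4_5
  have z03_a11 : A03 1 1 = 0 := by
    linear_combination (-1 : ℝ) * q_0_2_3_2 + ((1 : ℝ) * sqrt2) * q_0_2_4_5
  have z03_v : v03 = 0 := by
    linear_combination (((1 : ℝ)/2) * sqrt2) * q_0_3_4_3 + (((-1 : ℝ)/2) * (v03)) * hs
  have z03_u0 : u03 0 = 0 := by
    linear_combination (-1 : ℝ) * q_0_3_4_6
  have z03_u1 : u03 1 = 0 := by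
    linear_combination (1 : ℝ) * q_0_3_4_5
  have z03_y0 : y03 0 = 0 := by
    linear_combination (1 : ℝ) * q_0_3_4_1 + (1 : ℝ) * q_0_4_5_3 + ((1 : ℝ) * sqrt2) * q_0_5_6_1
  have z03_y1 : y03 1 = 0 := by
    linear_combination (1 : ℝ) * q_0_3_4_2 + (1 : ℝ) * q_0_4_6_3 + ((1 : ℝ) * sqrt2) * q_0_5_6_2
  have z05_a00 : A05 0 0 = 0 := by
    linear_combination (-1 : ℝ) * q_0_1_5_1
  have z05_a01 : A05 0 1 = 0 := by
    linear_combination (-1 : ℝ) * q_0_2_5_1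
  have z05_a10 : A05 1 0 = 0 := by
    linear_combination (((-1 : ℝ)/2) * sqrt2) * q_0_1_4_3 + (-1 : ℝ) * q_0_1_5_2 + (((1 : ℝ)/2) * (v01)) * hs
  have z05_a11 : A05 1 1 = 0 := by
    linear_combination (((-1 : ℝ)/2) * sqrt2) * q_0_2_4_3 + (-1 : ℝ) * q_0_2_5_2 + (((1 : ℝ)/2) * (v02)) * hs
  have z05_v : v05 = 0 := by
    linear_combination (1 : ℝ) * q_0_5_6_1
  have z05_u0 : u05 0 = 0 := by
    linear_combination (((-1 : ℝ)/2) * sqrt2) * q_0_3_5_1 + (((-1 : ℝ)/2) * (u05 0)) * hs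
  have z05_u1 : u05 1 = 0 := by
    linear_combination ((-1 : ℝ)/2) * q_0_3_4_3 + (((-1 : ℝ)/2) * sqrt2) * q_0_3_5_2 + (((-1 : ℝ)/2) * (u05 1)) * hs
  have z05_y0 : y05 0 = 0 := by
    linear_combination (-1 : ℝ) * q_0_4_5_1
  have z05_y1 : y05 1 = 0 := by
    linear_combination ((-1 : ℝ)/2) * q_0_4_5_2 + ((-1 : ℝ)/2) * q_0_4_6_1 + ((-1 : ℝ)/2) * q_0_5_6_0 + ((1 : ℝ)/2) * q_1_2_4_0 + (((1 : ℝ)/4) * sqrt2) * q_1_4_5_3 + ((1 : ℝ)/2) * q_1_5_6_1 + (((1 : ℝ)/4) * sqrt2) * q_2_4_6_3 + ((1 : ℝ)/2) * q_2_5_6_2 + (((-1 : ℝ)/4) * (u14 0) + ((1 : ℝ)/4) * (v15) + ((-1 : ℝ)/4) * (u24 1) + ((1 : ℝ)/4) * (v26)) * hs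
  have z06_a00 : A06 0 0 = 0 := by
    linear_combination (((1 : ℝ)/2) * sqrt2) * q_0_1_4_3 + (-1 : ℝ) * q_0_1_6_1 + (((-1 : ℝ)/2) * (v01)) * hs
  have z06_a01 : A06 0 1 = 0 := by
    linear_combination (((1 : ℝ)/2) * sqrt2) * q_0_2_4_3 + (-1 : ℝ) * q_0_2_6_1 + (((-1 : ℝ)/2) * (v02)) * hs
  have z06_a10 : A06 1 0 = 0 := by
    linear_combination (-1 : ℝ) * q_0_1_6_2
  have z06_a11 : A06 1 1 = 0 := by
    linear_combination (-1 : ℝ) * q_0_2_6_2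
  have z06_v : v06 = 0 := by
    linear_combination (1 : ℝ) * q_0_5_6_2
  have z06_u0 : u06 0 = 0 := by
    linear_combination ((1 : ℝ)/2) * q_0_3_4_3 + (((-1 : ℝ)/2) * sqrt2) * q_0_3_6_1 + (((-1 : ℝ)/2) * (u06 0)) * hs
  have z06_u1 : u06 1 = 0 := by
    linear_combination (((-1 : ℝ)/2) * sqrt2) * q_0_3_6_2 + (((-1 : ℝ)/2) * (u06 1)) * hs
  have z06_y0 : y06 0 = 0 := by
    linear_combination ((-1 : ℝ)/2) * q_0_4_5_2 + ((-1 : ℝ)/2) * q_0_4_6_1 + ((1 : ℝ)/2) * q_0_5_6_0 + ((-1 : ℝ)/2) * q_1_2_4_0 + (((-1 : ℝ)/4) * sqrt2) * q_1_4_5_3 + ((-1 : ℝ)/2) * q_1_5_6_1 + (((-1 : ℝ)/4) * sqrt2) * q_2_4_6_3 + ((-1 : ℝ)/2) * q_2_5_6_2 + (((1 : ℝ)/4) * (u14 0) + ((-1 : ℝ)/4) * (v15) + ((1 : ℝ)/4) * (u24 1) + ((-1 : ℝ)/4) * (v26)) * hs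
  have z06_y1 : y06 1 = 0 := by
    linear_combination (-1 : ℝ) * q_0_4_6_2
  have z12_a00 : A12 0 0 = 0 := by
    linear_combination (-1 : ℝ) * q_1_2_5_5
  have z12_a01 : A12 0 1 = 0 := by
    linear_combination (-1 : ℝ) * q_1_2_5_6
  have z12_a10 : A12 1 0 = 0 := by
    linear_combination (-1 : ℝ) * q_1_2_6_5
  have z12_a11 : A12 1 1 = 0 := by
    linear_combination (1 : ℝ) * q_0_1_2_0 + (1 : ℝ) * q_0_1_4_6 + (-1 : ℝ) * q_0_2_4_5 + (1 : ℝ) * q_1_2_5_5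
  have z12_v : v12 = 0 := by
    linear_combination (((1 : ℝ)/2) * sqrt2) * q_1_2_4_3 + (((-1 : ℝ)/2) * (v12)) * hs
  have z12_u0 : u12 0 = 0 := by
    linear_combination (-1 : ℝ) * q_1_2_4_6
  have z12_u1 : u12 1 = 0 := by
    linear_combination (1 : ℝ) * q_1_2_4_5
  have z12_y0 : y12 0 = 0 := by
    linear_combination (((-1 : ℝ)/2) * sqrt2) * q_0_3_4_1 + (((-1 : ℝ)/2) * sqrt2) * q_0_3_5_0 + (((-1 : ℝ)/2) * sqrt2) * q_0_4_5_3 + (-2 : ℝ) * q_0_5_6_1 + (-1 : ℝ) * q_1_2_5_0 + (((1 : ℝ)/2) * sqrt2) * q_1_3_5_1 + ((1 : ℝ)/2) * q_2_3_4_3 + (((1 : ℝ)/2) * sqrt2) * q_2_3_5_2 + ((-1 : ℝ) * (v05) + ((1 : ℝ)/2) * (u15 0) + ((1 : ℝ)/2) * (u25 1)) * hs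
  have z12_y1 : y12 1 = 0 := by
    linear_combination (((-1 : ℝ)/2) * sqrt2) * q_0_3_4_2 + (((-1 : ℝ)/2) * sqrt2) * q_0_3_6_0 + (((-1 : ℝ)/2) * sqrt2) * q_0_4_6_3 + (-2 : ℝ) * q_0_5_6_2 + (-1 : ℝ) * q_1_2_6_0 + ((-1 : ℝ)/2) * q_1_3_4_3 + (((1 : ℝ)/2) * sqrt2) * q_1_3_6_1 + (((1 : ℝ)/2) * sqrt2) * q_2_3_6_2 + ((-1 : ℝ) * (v06) + ((1 : ℝ)/2) * (u16 0) + ((1 : ℝ)/2) * (u26 1)) * hs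
  have z13_a00 : A13 0 0 = 0 := by
    linear_combination (-1 : ℝ) * q_1_3_5_5
  have z13_a01 : A13 0 1 = 0 := by
    linear_combination (-1 : ℝ) * q_1_3_5_6
  have z13_a10 : A13 1 0 = 0 := by
    linear_combination (-1 : ℝ) * q_1_3_6_5
  have z13_a11 : A13 1 1 = 0 := by
    linear_combination (1 : ℝ) * q_0_1_3_0 + (-1 : ℝ) * q_0_1_4_3 + (-1 : ℝ) * q_0_3_4_5 + (1 : ℝ) * q_1_3_5_5
  have z13_v : v13 = 0 := by
    linear_combination (((1 : ℝ)/2) * sqrt2) * q_1_3_4_3 + (((-1 : ℝ)/2) * (v13)) * hs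
  have z13_u0 : u13 0 = 0 := by
    linear_combination (-1 : ℝ) * q_1_3_4_6
  have z13_u1 : u13 1 = 0 := by
    linear_combination (1 : ℝ) * q_1_3_4_5
  have z13_y0 : y13 0 = 0 := by
    linear_combination ((1 : ℝ)/2) * q_1_3_4_1 + ((-1 : ℝ)/2) * q_1_3_5_0 + ((1 : ℝ)/2) * q_1_4_5_3 + ((1 : ℝ)/2) * q_3_4_5_5
  have z13_y1 : y13 1 = 0 := by
    linear_combination ((1 : ℝ)/2) * q_1_3_4_2 + ((-1 : ℝ)/2) * q_1_3_6_0 + ((1 : ℝ)/2) * q_1_4_6_3 + ((1 : ℝ)/2) * q_3_4_6_5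
  have z23_a00 : A23 0 0 = 0 := by
    linear_combination (1 : ℝ) * q_1_2_3_1 + ((1 : ℝ) * sqrt2) * q_1_2_4_6 + (-1 : ℝ) * q_1_3_5_6
  have z23_a01 : A23 0 1 = 0 := by
    linear_combination (-1 : ℝ) * q_2_3_5_6
  have z23_a10 : A23 1 0 = 0 := by
    linear_combination (1 : ℝ) * q_0_1_3_0 + (-1 : ℝ) * q_0_1_4_3 + (-1 : ℝ) * q_0_3_4_5 + (1 : ℝ) * q_1_2_3_2 + ((-1 : ℝ) * sqrt2) * q_1_2_4_5 + (1 : ℝ) * q_1_3_5_5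
  have z23_a11 : A23 1 1 = 0 := by
    linear_combination (1 : ℝ) * q_0_2_3_0 + (-1 : ℝ) * q_0_2_4_3 + (-1 : ℝ) * q_0_3_4_6 + (-1 : ℝ) * q_1_2_3_1 + ((-1 : ℝ) * sqrt2) * q_1_2_4_6 + (1 : ℝ) * q_1_3_5_6
  have z23_v : v23 = 0 := by
    linear_combination (((1 : ℝ)/2) * sqrt2) * q_2_3_4_3 + (((-1 : ℝ)/2) * (v23)) * hs
  have z23_u0 : u23 0 = 0 := by
    linear_combination (-1 : ℝ) * q_2_3_4_6
  have z23_u1 : u23 1 = 0 := by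
    linear_combination (-1 : ℝ) * q_1_2_3_0 + (1 : ℝ) * q_1_2_4_3 + (1 : ℝ) * q_1_3_4_6
  have z23_y0 : y23 0 = 0 := by
    linear_combination ((1 : ℝ)/2) * q_2_3_4_1 + ((-1 : ℝ)/2) * q_2_3_5_0 + ((1 : ℝ)/2) * q_2_4_5_3 + ((1 : ℝ)/2) * q_3_4_5_6
  have z23_y1 : y23 1 = 0 := by
    linear_combination (-1 : ℝ) * q_0_3_4_0 + (((1 : ℝ)/2) * sqrt2) * q_0_4_5_2 + (((-1 : ℝ)/2) * sqrt2) * q_0_4_6_1 + (((-1 : ℝ)/2) * sqrt2) * q_0_5_6_0 + (((-1 : ℝ)/2) * sqrt2) * q_1_2_4_0 + ((1 : ℝ)/2) * q_1_3_4_1 + ((1 : ℝ)/2) * q_1_3_5_0 + (((1 : ℝ)/2) * sqrt2) * q_1_5_6_1 + (1 : ℝ) * q_2_3_4_2 + ((1 : ℝ)/2) * q_2_4_6_3 + (((1 : ℝ)/2) * sqrt2) * q_2_5_6_2 + ((-1 : ℝ)/2) * q_3_4_5_5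
  have z04_a00 : A04 0 0 = 0 := by
    linear_combination ((1 : ℝ)/2) * q_0_3_4_3 + (((1 : ℝ)/2) * sqrt2) * q_0_3_5_2 + (-1 : ℝ) * q_0_4_5_5 + (((1 : ℝ)/2) * (u05 1)) * hs
  have z04_a01 : A04 0 1 = 0 := by
    linear_combination (((-1 : ℝ)/2) * sqrt2) * q_0_3_5_1 + (-1 : ℝ) * q_0_4_5_6 + (((-1 : ℝ)/2) * (u05 0)) * hs
  have z04_a10 : A04 1 0 = 0 := by
    linear_combination (((1 : ℝ)/2) * sqrt2) * q_0_3_6_2 + (-1 : ℝ) * q_0_4_6_5 + (((1 : ℝ)/2) * (u06 1)) * hs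
  have z04_a11 : A04 1 1 = 0 := by
    linear_combination ((1 : ℝ)/2) * q_0_3_4_3 + (((-1 : ℝ)/2) * sqrt2) * q_0_3_6_1 + (-1 : ℝ) * q_0_4_6_6 + (((-1 : ℝ)/2) * (u06 0)) * hs
  have z04_v : v04 = 0 := by
    linear_combination ((-1 : ℝ)/2) * q_0_4_5_2 + ((1 : ℝ)/2) * q_0_4_6_1 + ((1 : ℝ)/2) * q_0_5_6_0 + ((-1 : ℝ)/2) * q_1_2_4_0 + (((-1 : ℝ)/4) * sqrt2) * q_1_4_5_3 + ((-1 : ℝ)/2) * q_1_5_6_1 + (((-1 : ℝ)/4) * sqrt2) * q_2_4_6_3 + ((-1 : ℝ)/2) * q_2_5_6_2 + (((1 : ℝ)/4) * (u14 0) + ((-1 : ℝ)/4) * (v15) + ((1 : ℝ)/4) * (u24 1) + ((-1 : ℝ)/4) * (v26)) * hs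
  have z04_u0 : u04 0 = 0 := by
    linear_combination (((1 : ℝ)/2) * sqrt2) * q_0_4_5_3 + (1 : ℝ) * q_0_5_6_1 + (((-1 : ℝ)/2) * (u04 0) + ((1 : ℝ)/2) * (v05)) * hs
  have z04_u1 : u04 1 = 0 := by
    linear_combination (((1 : ℝ)/2) * sqrt2) * q_0_4_6_3 + (1 : ℝ) * q_0_5_6_2 + (((-1 : ℝ)/2) * (u04 1) + ((1 : ℝ)/2) * (v06)) * hs
  have f04_y0 : y04 0 = A45 0 0 + A45 1 1 := by
    linear_combination (-1 : ℝ) * q_0_4_5_0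
  have f04_y1 : y04 1 = A46 0 0 + A46 1 1 := by
    linear_combination (-1 : ℝ) * q_0_4_6_0
  have tr01 : A01 0 0 + A01 1 1 = 0 := by
    linear_combination (-1 : ℝ) * q_0_1_4_4
  have tr02 : A02 0 0 + A02 1 1 = 0 := by
    linear_combination (-1 : ℝ) * q_0_2_4_4
  have tr03 : A03 0 0 + A03 1 1 = 0 := by
    linear_combination (-1 : ℝ) * q_0_1_3_1 + ((-1 : ℝ) * sqrt2) * q_0_1_4_6 + (-1 : ℝ) * q_0_2_3_2 + ((1 : ℝ) * sqrt2) * q_0_2_4_5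
  have tr05 : A05 0 0 + A05 1 1 = 0 := by
    linear_combination (-1 : ℝ) * q_0_1_5_1 + (((-1 : ℝ)/2) * sqrt2) * q_0_2_4_3 + (-1 : ℝ) * q_0_2_5_2 + (((1 : ℝ)/2) * (v02)) * hs
  have tr06 : A06 0 0 + A06 1 1 = 0 := by
    linear_combination (((1 : ℝ)/2) * sqrt2) * q_0_1_4_3 + (-1 : ℝ) * q_0_1_6_1 + (-1 : ℝ) * q_0_2_6_2 + (((-1 : ℝ)/2) * (v01)) * hs
  have tr12 : A12 0 0 + A12 1 1 = 0 := by
    linear_combination (1 : ℝ) * q_0_1_2_0 + (1 : ℝ) * q_0_1_4_6 + (-1 : ℝ) * q_0_2_4_5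
  have tr13 : A13 0 0 + A13 1 1 = 0 := by
    linear_combination (1 : ℝ) * q_0_1_3_0 + (-1 : ℝ) * q_0_1_4_3 + (-1 : ℝ) * q_0_3_4_5
  have tr23 : A23 0 0 + A23 1 1 = 0 := by
    linear_combination (1 : ℝ) * q_0_2_3_0 + (-1 : ℝ) * q_0_2_4_3 + (-1 : ℝ) * q_0_3_4_6
  have tr04 : A04 0 0 + A04 1 1 = 0 := by
    linear_combination (1 : ℝ) * q_0_3_4_3 + (((1 : ℝ)/2) * sqrt2) * q_0_3_5_2 + (((-1 : ℝ)/2) * sqrt2) * q_0_3_6_1 + (-1 : ℝ) * q_0_4_5_5 + (-1 : ℝ) * q_0_4_6_6 + (((1 : ℝ)/2) * (u05 1) + ((-1 : ℝ)/2) * (u06 0)) * hs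
  have tr14 : A14 0 0 + A14 1 1 = 0 := by
    linear_combination (1 : ℝ) * q_0_1_4_0 + (((-1 : ℝ)/2) * sqrt2) * q_0_4_6_3 + (-1 : ℝ) * q_0_5_6_2 + (((1 : ℝ)/2) * (u04 1) + ((-1 : ℝ)/2) * (v06)) * hs
  have tr15 : A15 0 0 + A15 1 1 = 0 := by
    linear_combination (1 : ℝ) * q_0_1_4_1 + (1 : ℝ) * q_0_1_5_0 + (1 : ℝ) * q_0_3_4_3 + ((1 : ℝ) * sqrt2) * q_0_3_5_2 + (-1 : ℝ) * q_0_4_5_5 + ((1 : ℝ) * (u05 1)) * hs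
  have tr16 : A16 0 0 + A16 1 1 = 0 := by
    linear_combination (1 : ℝ) * q_0_1_4_2 + (1 : ℝ) * q_0_1_6_0 + ((1 : ℝ) * sqrt2) * q_0_3_6_2 + (-1 : ℝ) * q_0_4_6_5 + ((1 : ℝ) * (u06 1)) * hs
  have tr24 : A24 0 0 + A24 1 1 = 0 := by
    linear_combination (1 : ℝ) * q_0_2_4_0 + (((1 : ℝ)/2) * sqrt2) * q_0_4_5_3 + (1 : ℝ) * q_0_5_6_1 + (((-1 : ℝ)/2) * (u04 0) + ((1 : ℝ)/2) * (v05)) * hs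
  have tr25 : A25 0 0 + A25 1 1 = 0 := by
    linear_combination (1 : ℝ) * q_0_2_4_1 + (1 : ℝ) * q_0_2_5_0 + ((-1 : ℝ) * sqrt2) * q_0_3_5_1 + (-1 : ℝ) * q_0_4_5_6 + ((-1 : ℝ) * (u05 0)) * hs
  have tr26 : A26 0 0 + A26 1 1 = 0 := by
    linear_combination (1 : ℝ) * q_0_2_4_2 + (1 : ℝ) * q_0_2_6_0 + (1 : ℝ) * q_0_3_4_3 + ((-1 : ℝ) * sqrt2) * q_0_3_6_1 + (-1 : ℝ) * q_0_4_6_6 + ((-1 : ℝ) * (u06 0)) * hs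
  have tr34 : A34 0 0 + A34 1 1 = 0 := by
    linear_combination (1 : ℝ) * q_0_3_4_0 + (((-1 : ℝ)/2) * sqrt2) * q_0_4_5_2 + (((1 : ℝ)/2) * sqrt2) * q_0_4_6_1 + (((1 : ℝ)/2) * sqrt2) * q_0_5_6_0 + (((-1 : ℝ)/2) * sqrt2) * q_1_2_4_0 + ((-1 : ℝ)/2) * q_1_4_5_3 + (((-1 : ℝ)/2) * sqrt2) * q_1_5_6_1 + ((-1 : ℝ)/2) * q_2_4_6_3 + (((-1 : ℝ)/2) * sqrt2) * q_2_5_6_2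
  have tr35 : A35 0 0 + A35 1 1 = 0 := by
    linear_combination (1 : ℝ) * q_0_3_4_1 + (1 : ℝ) * q_0_3_5_0 + (1 : ℝ) * q_0_4_5_3 + ((2 : ℝ) * sqrt2) * q_0_5_6_1
  have tr36 : A36 0 0 + A36 1 1 = 0 := by
    linear_combination (1 : ℝ) * q_0_3_4_2 + (1 : ℝ) * q_0_3_6_0 + (1 : ℝ) * q_0_4_6_3 + ((2 : ℝ) * sqrt2) * q_0_5_6_2
  have tr56 : A56 0 0 + A56 1 1 = 0 := by
    linear_combination (1 : ℝ) * q_1_2_4_0 + (((1 : ℝ)/2) * sqrt2) * q_1_4_5_3 + (1 : ℝ) * q_1_5_6_1 + (((1 : ℝ)/2) * sqrt2) * q_2_4_6_3 + (1 : ℝ) * q_2_5_6_2 + (((-1 : ℝ)/2) * (u14 0) + ((1 : ℝ)/2) * (v15) + ((-1 : ℝ)/2) * (u24 1) + ((1 : ℝ)/2) * (v26)) * hs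
  clear key hBianchi
  clear q_0_1_2_0 q_0_1_2_1 q_0_1_2_2 q_0_1_3_0 q_0_1_3_1 q_0_1_3_2 q_0_1_4_0 q_0_1_4_1 q_0_1_4_2 q_0_1_4_3 q_0_1_4_4 q_0_1_4_5 q_0_1_4_6 q_0_1_5_0 q_0_1_5_1 q_0_1_5_2 q_0_1_5_5 q_0_1_5_6 q_0_1_6_0 q_0_1_6_1 q_0_1_6_2 q_0_1_6_5 q_0_2_3_0 q_0_2_3_1 q_0_2_3_2 q_0_2_4_0 q_0_2_4_1 q_0_2_4_2 q_0_2_4_3 q_0_2_4_4 q_0_2_4_5 q_0_2_4_6 q_0_2_5_0 q_0_2_5_1 q_0_2_5_2 q_0_2_5_6 q_0_2_6_0 q_0_2_6_1 q_0_2_6_2 q_0_3_4_0 q_0_3_4_1 q_0_3_4_2 q_0_3_4_3 q_0_3_4_5 q_0_3_4_6 q_0_3_5_0 q_0_3_5_1 q_0_3_5_2 q_0_3_6_0 q_0_3_6_1 q_0_3_6_2 q_0_4_5_0 q_0_4_5_1 q_0_4_5_2 q_0_4_5_3 q_0_4_5_5 q_0_4_5_6 q_0_4_6_0 q_0_4_6_1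 q_0_4_6_2 q_0_4_6_3 q_0_4_6_5 q_0_4_6_6 q_0_5_6_0 q_0_5_6_1 q_0_5_6_2 q_1_2_3_0 q_1_2_3_1 q_1_2_3_2 q_1_2_4_0 q_1_2_4_3 q_1_2_4_5 q_1_2_4_6 q_1_2_5_0 q_1_2_5_5 q_1_2_5_6 q_1_2_6_0 q_1_2_6_5 q_1_3_4_1 q_1_3_4_2 q_1_3_4_3 q_1_3_4_5 q_1_3_4_6 q_1_3_5_0 q_1_3_5_1 q_1_3_5_5 q_1_3_5_6 q_1_3_6_0 q_1_3_6_1 q_1_3_6_5 q_1_4_5_3 q_1_4_6_3 q_1_5_6_1 q_2_3_4_1 q_2_3_4_2 q_2_3_4_3 q_2_3_4_6 q_2_3_5_0 q_2_3_5_2 q_2_3_5_6 q_2_3_6_2 q_2_4_5_3 q_2_4_6_3 q_2_5_6_2 q_3_4_5_5 q_3_4_5_6 q_3_4_6_5 h14 h15 h16 h24 h25 h26 h34 h35 h36 h45 h46 h56 hMem hs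
  refine ⟨?_, ?_, ?_, ?_⟩
  · intro j hj
    fin_cases j
    · exact hAlt (stdB 0)
    · exact h01.trans (hImat_eq_zero z01_a00 z01_a01 z01_a10 z01_a11 z01_v z01_u0 z01_u1 z01_y0 z01_y1)
    · exact h02.trans (hImat_eq_zero z02_a00 z02_a01 z02_a10 z02_a11 z02_v z02_u0 z02_u1 z02_y0 z02_y1)
    · exact h03.trans (hImat_eq_zero z03_a00 z03_a01 z03_a10 z03_a11 z03_v z03_u0 z03_u1 z03_y0 z03_y1)
    · exact absurd (by decide) hj
    · exact h05.trans (hImat_eq_zero z05_a00 z05_a01 z05_a10 z05_a11 z05_v z05_u0 z05_u1 z05_y0 z05_y1)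
    · exact h06.trans (hImat_eq_zero z06_a00 z06_a01 z06_a10 z06_a11 z06_v z06_u0 z06_u1 z06_y0 z06_y1)
  · intro i j hi hj
    simp only [Set.mem_insert_iff, Set.mem_singleton_iff] at hi hj
    rcases hi with rfl | rfl | rfl <;> rcases hj with rfl | rfl | rfl
    · exact hAlt (stdB 1)
    · rw [h12]
      exact hImat_eq_zero z12_a00 z12_a01 z12_a10 z12_a11 z12_v z12_u0 z12_u1 z12_y0 z12_y1
    · rw [h13]
      exact hImat_eq_zero z13_a00 z13_a01 z13_a10 z13_a11 z13_v z13_u0 z13_u1 z13_y0 z13_y1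
    · rw [skew (stdB 1) (stdB 2), h12, hImat_eq_zero z12_a00 z12_a01 z12_a10 z12_a11 z12_v z12_u0 z12_u1 z12_y0 z12_y1]
      exact neg_zero
    · exact hAlt (stdB 2)
    · rw [h23]
      exact hImat_eq_zero z23_a00 z23_a01 z23_a10 z23_a11 z23_v z23_u0 z23_u1 z23_y0 z23_y1
    · rw [skew (stdB 1) (stdB 3), h13, hImat_eq_zero z13_a00 z13_a01 z13_a10 z13_a11 z13_v z13_u0 z13_u1 z13_y0 z13_y1]
      exact neg_zero
    · rw [skew (stdB 2) (stdB 3), h23, hImat_eq_zero z23_a00 z23_a01 z23_a10 z23_a11 z23_v z23_u0 z23_u1 z23_y0 z23_y1]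
      exact neg_zero
    · exact hAlt (stdB 3)
  · intro i j A v u y hlt hne1 hne2 h'
    fin_cases i <;> fin_cases j
    · exact absurd hlt (by decide)
    · have e00 : A.trace = A01 0 0 + A01 1 1 := congrFun (congrFun (h'.symm.trans h01') 0) 0
      rw [e00]
      exact tr01
    · have e00 : A.trace = A02 0 0 + A02 1 1 := congrFun (congrFun (h'.symm.trans h02') 0) 0
      rw [e00]
      exact tr02
    · have e00 : A.trace = A03 0 0 + A03 1 1 := congrFun (congrFun (h'.symm.trans h03') 0) 0
      rw [e00]
      exact tr03
    · have e00 : A.trace = A04 0 0 + A04 1 1 := congrFun (congrFun (h'.symm.trans h04') 0) 0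
      rw [e00]
      exact tr04
    · have e00 : A.trace = A05 0 0 + A05 1 1 := congrFun (congrFun (h'.symm.trans h05') 0) 0
      rw [e00]
      exact tr05
    · have e00 : A.trace = A06 0 0 + A06 1 1 := congrFun (congrFun (h'.symm.trans h06') 0) 0
      rw [e00]
      exact tr06
    · exact absurd hlt (by decide)
    · exact absurd hlt (by decide)
    · have e00 : A.trace = A12 0 0 + A12 1 1 := congrFun (congrFun (h'.symm.trans h12') 0) 0
      rw [e00]
      exact tr12
    · have e00 : A.trace = A13 0 0 + A13 1 1 := congrFun (congrFun (h'.symm.trans h13') 0) 0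
      rw [e00]
      exact tr13
    · have e00 : A.trace = A14 0 0 + A14 1 1 := congrFun (congrFun (h'.symm.trans h14') 0) 0
      rw [e00]
      exact tr14
    · have e00 : A.trace = A15 0 0 + A15 1 1 := congrFun (congrFun (h'.symm.trans h15') 0) 0
      rw [e00]
      exact tr15
    · have e00 : A.trace = A16 0 0 + A16 1 1 := congrFun (congrFun (h'.symm.trans h16') 0) 0
      rw [e00]
      exact tr16
    · exact absurd hlt (by decide)
    · exact absurd hlt (by decide)
    · exact absurd hlt (by decide)
    · have e00 : A.trace = A23 0 0 + A23 1 1 := congrFun (congrFun (h'.symm.trans h23') 0) 0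
      rw [e00]
      exact tr23
    · have e00 : A.trace = A24 0 0 + A24 1 1 := congrFun (congrFun (h'.symm.trans h24') 0) 0
      rw [e00]
      exact tr24
    · have e00 : A.trace = A25 0 0 + A25 1 1 := congrFun (congrFun (h'.symm.trans h25') 0) 0
      rw [e00]
      exact tr25
    · have e00 : A.trace = A26 0 0 + A26 1 1 := congrFun (congrFun (h'.symm.trans h26') 0) 0
      rw [e00]
      exact tr26
    · exact absurd hlt (by decide)
    · exact absurd hlt (by decide)
    · exact absurd hlt (by decide)
    · exact absurd hlt (by decide)
    · have e00 : A.trace = A34 0 0 + A34 1 1 := congrFun (congrFun (h'.symm.trans h34') 0) 0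
      rw [e00]
      exact tr34
    · have e00 : A.trace = A35 0 0 + A35 1 1 := congrFun (congrFun (h'.symm.trans h35') 0) 0
      rw [e00]
      exact tr35
    · have e00 : A.trace = A36 0 0 + A36 1 1 := congrFun (congrFun (h'.symm.trans h36') 0) 0
      rw [e00]
      exact tr36
    · exact absurd hlt (by decide)
    · exact absurd hlt (by decide)
    · exact absurd hlt (by decide)
    · exact absurd hlt (by decide)
    · exact absurd hlt (by decide)
    · exact absurd (by decide) hne1
    · exact absurd (by decide) hne2
    · exact absurd hlt (by decide)
    · exact absurd hlt (by decide)
    · exact absurd hlt (by decide)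
    · exact absurd hlt (by decide)
    · exact absurd hlt (by decide)
    · exact absurd hlt (by decide)
    · have e00 : A.trace = A56 0 0 + A56 1 1 := congrFun (congrFun (h'.symm.trans h56') 0) 0
      rw [e00]
      exact tr56
    · exact absurd hlt (by decide)
    · exact absurd hlt (by decide)
    · exact absurd hlt (by decide)
    · exact absurd hlt (by decide)
    · exact absurd hlt (by decide)
    · exact absurd hlt (by decide)
    · exact absurd hlt (by decide)
  · intro A56 v56 u56 y56 A57 v57 u57 y57 hp5 hp6
    have e1 : A56.trace = A45 0 0 + A45 1 1 := congrFun (congrFun (hp5.symm.trans h45') 0) 0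
    have e2 : A57.trace = A46 0 0 + A46 1 1 := congrFun (congrFun (hp6.symm.trans h46') 0) 0
    rw [h04]
    apply hImat_congr
    · intro i j
      fin_cases i <;> fin_cases j <;> simp only [Matrix.zero_apply]
      exacts [z04_a00, z04_a01, z04_a10, z04_a11]
    · exact z04_v
    · intro i
      fin_cases i <;> simp only [Pi.zero_apply]
      exacts [z04_u0, z04_u1]
    · intro i
      fin_cases i
      exacts [f04_y0.trans e1.symm, f04_y1.trans e2.symm]
end
end

section
/- Let h ⊆ h^I be a Lie subalgebra which is a Berger algebra, i.e. h = span{R(x,y) : R ∈ K(h), x,y ∈ ℝ⁷}. If h contains an element h(A,v,u,y) with tr A ≠ 0, then there exists y ∈ ℝ² with y ≠ 0 and h(0,0,0,y) ∈ h. -/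
noncomputable section

open scoped Matrix

attribute [local instance 100] LieRing.ofAssociativeRing

/-- Corollary 2.7: if a Berger algebra `h ⊆ h^I` contains an element
`h(A,v,u,y)` with `tr A ≠ 0`, then it contains a nonzero element `h(0,0,0,y)`. -/
theorem stmt11 (h : LieSubalgebra ℝ M7) (hsub : (h : Set M7) ⊆ hIset)
    (hberger : IsBerger h)
    (hA : ∃ (A : M2) (v : ℝ) (u y : Fin 2 → ℝ), hImat A v u y ∈ h ∧ A.trace ≠ 0) :
    ∃ y : Fin 2 → ℝ, y ≠ 0 ∧ hImat 0 0 0 y ∈ h := by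
  classical
  have hs2 : sqrt2 * sqrt2 = 2 := Real.mul_self_sqrt (by norm_num)
  obtain ⟨A₀, v₀, u₀, y₀, hX0, htr⟩ := hA
  have hX0tr : (hImat A₀ v₀ u₀ y₀) 0 0 ≠ 0 := htr
  have hexR : ∃ R ∈ curvSet (h : Set M7), ∃ x y : V7, R x y 0 0 ≠ 0 := by
    by_contra hc
    push_neg at hc
    set f : M7 →ₗ[ℝ] ℝ :=
      { toFun := fun X => X 0 0, map_add' := fun _ _ => rfl, map_smul' := fun _ _ => rfl }
    have hsp : Submodule.span ℝ {X | ∃ R ∈ curvSet ((h : Set M7)), ∃ x y : V7, X = R x y} ≤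
        LinearMap.ker f := by
      rw [Submodule.span_le]
      rintro X ⟨R, hRc, x, y, rfl⟩
      exact LinearMap.mem_ker.mpr (hc R hRc x y)
    have hm : hImat A₀ v₀ u₀ y₀ ∈ h.toSubmodule := hX0
    have hb2 : h.toSubmodule = Submodule.span ℝ {X | ∃ R ∈ curvSet ((h : Set M7)), ∃ x y : V7, X = R x y} := hberger
    rw [hb2] at hm
    exact hX0tr (hsp hm)
  obtain ⟨R, hRc, xw, yw, hxy⟩ := hexR
  obtain ⟨hRalt, hRmem, hRbian⟩ := hRc
  have hanti : ∀ x y : V7, R y x = - R x y := by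
    intro x y
    have h0 := hRalt (x + y)
    simp only [map_add, LinearMap.add_apply, hRalt, zero_add, add_zero] at h0
    exact eq_neg_of_add_eq_zero_left h0
  have e1 : ∀ (M : M7) (c d : Fin 7), M.mulVec (stdB c) d = M d c := by
    intro M c d
    simp [stdB, Matrix.mulVec_single]
  have hb : ∀ i j k r : Fin 7,
      R (stdB i) (stdB j) r k + R (stdB j) (stdB k) r i - R (stdB i) (stdB k) r j = 0 := by
    intro i j k r
    have h1 := hRbian (stdB i) (stdB j) (stdB k)
    rw [hanti (stdB i) (stdB k)] at h1
    have h2 := congrFun h1 r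
    simp only [Pi.add_apply, Pi.zero_apply, Matrix.neg_mulVec, Pi.neg_apply, e1] at h2
    linarith [h2]
  obtain ⟨A01, v01, u01, y01, hm01⟩ := hsub (hRmem (stdB 0) (stdB 1))
  obtain ⟨A02, v02, u02, y02, hm02⟩ := hsub (hRmem (stdB 0) (stdB 2))
  obtain ⟨A03, v03, u03, y03, hm03⟩ := hsub (hRmem (stdB 0) (stdB 3))
  obtain ⟨A04, v04, u04, y04, hm04⟩ := hsub (hRmem (stdB 0) (stdB 4))
  obtain ⟨A05, v05, u05, y05, hm05⟩ := hsub (hRmem (stdB 0) (stdB 5))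
  obtain ⟨A06, v06, u06, y06, hm06⟩ := hsub (hRmem (stdB 0) (stdB 6))
  obtain ⟨A12, v12, u12, y12, hm12⟩ := hsub (hRmem (stdB 1) (stdB 2))
  obtain ⟨A13, v13, u13, y13, hm13⟩ := hsub (hRmem (stdB 1) (stdB 3))
  obtain ⟨A14, v14, u14, y14, hm14⟩ := hsub (hRmem (stdB 1) (stdB 4))
  obtain ⟨A15, v15, u15, y15, hm15⟩ := hsub (hRmem (stdB 1) (stdB 5))
  obtain ⟨A16, v16, u16, y16, hm16⟩ := hsub (hRmem (stdB 1) (stdB 6))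
  obtain ⟨A23, v23, u23, y23, hm23⟩ := hsub (hRmem (stdB 2) (stdB 3))
  obtain ⟨A24, v24, u24, y24, hm24⟩ := hsub (hRmem (stdB 2) (stdB 4))
  obtain ⟨A25, v25, u25, y25, hm25⟩ := hsub (hRmem (stdB 2) (stdB 5))
  obtain ⟨A26, v26, u26, y26, hm26⟩ := hsub (hRmem (stdB 2) (stdB 6))
  obtain ⟨A34, v34, u34, y34, hm34⟩ := hsub (hRmem (stdB 3) (stdB 4))
  obtain ⟨A35, v35, u35, y35, hm35⟩ := hsub (hRmem (stdB 3) (stdB 5))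
  obtain ⟨A36, v36, u36, y36, hm36⟩ := hsub (hRmem (stdB 3) (stdB 6))
  obtain ⟨A45, v45, u45, y45, hm45⟩ := hsub (hRmem (stdB 4) (stdB 5))
  obtain ⟨A46, v46, u46, y46, hm46⟩ := hsub (hRmem (stdB 4) (stdB 6))
  obtain ⟨A56, v56, u56, y56, hm56⟩ := hsub (hRmem (stdB 5) (stdB 6))
  have b0 : u01 0 + Matrix.trace A12 - (-u02 1) = 0 := by
    have h1 := hb 0 1 2 0
    rw [hm01, hm12, hm02] at h1
    exact h1
  simp only [Matrix.trace_fin_two] at b0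
  have b3 : sqrt2 * v01 + Matrix.trace A13 - (-u03 1) = 0 := by
    have h1 := hb 0 1 3 0
    rw [hm01, hm13, hm03] at h1
    exact h1
  simp only [Matrix.trace_fin_two] at b3
  have b4 : sqrt2 * u01 0 + 0 - (A03 0 0) = 0 := by
    have h1 := hb 0 1 3 1
    rw [hm01, hm13, hm03] at h1
    exact h1
  have b6 : 0 + Matrix.trace A14 - (-u04 1) = 0 := by
    have h1 := hb 0 1 4 0
    rw [hm01, hm14, hm04] at h1
    exact h1
  simp only [Matrix.trace_fin_two] at b6
  have b7 : y01 0 + 0 - (A04 0 0) = 0 := by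
    have h1 := hb 0 1 4 1
    rw [hm01, hm14, hm04] at h1
    exact h1
  have b8 : y01 1 + 0 - (A04 1 0) = 0 := by
    have h1 := hb 0 1 4 2
    rw [hm01, hm14, hm04] at h1
    exact h1
  have b9 : sqrt2 * v01 + 0 - (0) = 0 := by
    have h1 := hb 0 1 4 3
    rw [hm01, hm14, hm04] at h1
    exact h1
  have b10 : -Matrix.trace A01 + 0 - (0) = 0 := by
    have h1 := hb 0 1 4 4
    rw [hm01, hm14, hm04] at h1
    exact h1
  simp only [Matrix.trace_fin_two] at b10
  have b13 : -y01 0 + Matrix.trace A15 - (-u05 1) = 0 := by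
    have h1 := hb 0 1 5 0
    rw [hm01, hm15, hm05] at h1
    exact h1
  simp only [Matrix.trace_fin_two] at b13
  have b14 : 0 + 0 - (A05 0 0) = 0 := by
    have h1 := hb 0 1 5 1
    rw [hm01, hm15, hm05] at h1
    exact h1
  have b16 : sqrt2 * u01 0 + 0 - (0) = 0 := by
    have h1 := hb 0 1 5 3
    rw [hm01, hm15, hm05] at h1
    exact h1
  have b19 : -y01 1 + Matrix.trace A16 - (-u06 1) = 0 := by
    have h1 := hb 0 1 6 0
    rw [hm01, hm16, hm06] at h1
    exact h1
  simp only [Matrix.trace_fin_two] at b19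
  have b20 : v01 + 0 - (A06 0 0) = 0 := by
    have h1 := hb 0 1 6 1
    rw [hm01, hm16, hm06] at h1
    exact h1
  have b25 : sqrt2 * v02 + Matrix.trace A23 - (u03 0) = 0 := by
    have h1 := hb 0 2 3 0
    rw [hm02, hm23, hm03] at h1
    exact h1
  simp only [Matrix.trace_fin_two] at b25
  have b27 : sqrt2 * u02 1 + 0 - (A03 1 1) = 0 := by
    have h1 := hb 0 2 3 2
    rw [hm02, hm23, hm03] at h1
    exact h1
  have b28 : 0 + Matrix.trace A24 - (u04 0) = 0 := by
    have h1 := hb 0 2 4 0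
    rw [hm02, hm24, hm04] at h1
    exact h1
  simp only [Matrix.trace_fin_two] at b28
  have b29 : y02 0 + 0 - (A04 0 1) = 0 := by
    have h1 := hb 0 2 4 1
    rw [hm02, hm24, hm04] at h1
    exact h1
  have b30 : y02 1 + 0 - (A04 1 1) = 0 := by
    have h1 := hb 0 2 4 2
    rw [hm02, hm24, hm04] at h1
    exact h1
  have b31 : sqrt2 * v02 + 0 - (0) = 0 := by
    have h1 := hb 0 2 4 3
    rw [hm02, hm24, hm04] at h1
    exact h1
  have b32 : -Matrix.trace A02 + 0 - (0) = 0 := by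
    have h1 := hb 0 2 4 4
    rw [hm02, hm24, hm04] at h1
    exact h1
  simp only [Matrix.trace_fin_two] at b32
  have b33 : u02 1 + 0 - (0) = 0 := by
    have h1 := hb 0 2 4 5
    rw [hm02, hm24, hm04] at h1
    exact h1
  have b35 : -y02 0 + Matrix.trace A25 - (u05 0) = 0 := by
    have h1 := hb 0 2 5 0
    rw [hm02, hm25, hm05] at h1
    exact h1
  simp only [Matrix.trace_fin_two] at b35
  have b37 : -v02 + 0 - (A05 1 1) = 0 := by
    have h1 := hb 0 2 5 2
    rw [hm02, hm25, hm05] at h1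
    exact h1
  have b41 : -y02 1 + Matrix.trace A26 - (u06 0) = 0 := by
    have h1 := hb 0 2 6 0
    rw [hm02, hm26, hm06] at h1
    exact h1
  simp only [Matrix.trace_fin_two] at b41
  have b43 : 0 + 0 - (A06 1 1) = 0 := by
    have h1 := hb 0 2 6 2
    rw [hm02, hm26, hm06] at h1
    exact h1
  have b47 : 0 + Matrix.trace A34 - (sqrt2 * v04) = 0 := by
    have h1 := hb 0 3 4 0
    rw [hm03, hm34, hm04] at h1
    exact h1
  simp only [Matrix.trace_fin_two] at b47
  have b48 : y03 0 + 0 - (sqrt2 * u04 0) = 0 := by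
    have h1 := hb 0 3 4 1
    rw [hm03, hm34, hm04] at h1
    exact h1
  have b49 : y03 1 + 0 - (sqrt2 * u04 1) = 0 := by
    have h1 := hb 0 3 4 2
    rw [hm03, hm34, hm04] at h1
    exact h1
  have b50 : sqrt2 * v03 + 0 - (0) = 0 := by
    have h1 := hb 0 3 4 3
    rw [hm03, hm34, hm04] at h1
    exact h1
  have b54 : -y03 0 + Matrix.trace A35 - (sqrt2 * v05) = 0 := by
    have h1 := hb 0 3 5 0
    rw [hm03, hm35, hm05] at h1
    exact h1
  simp only [Matrix.trace_fin_two] at b54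
  have b55 : 0 + 0 - (sqrt2 * u05 0) = 0 := by
    have h1 := hb 0 3 5 1
    rw [hm03, hm35, hm05] at h1
    exact h1
  have b56 : -v03 + 0 - (sqrt2 * u05 1) = 0 := by
    have h1 := hb 0 3 5 2
    rw [hm03, hm35, hm05] at h1
    exact h1
  have b57 : sqrt2 * u03 0 + 0 - (0) = 0 := by
    have h1 := hb 0 3 5 3
    rw [hm03, hm35, hm05] at h1
    exact h1
  have b60 : -y03 1 + Matrix.trace A36 - (sqrt2 * v06) = 0 := by
    have h1 := hb 0 3 6 0
    rw [hm03, hm36, hm06] at h1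
    exact h1
  simp only [Matrix.trace_fin_two] at b60
  have b61 : v03 + 0 - (sqrt2 * u06 0) = 0 := by
    have h1 := hb 0 3 6 1
    rw [hm03, hm36, hm06] at h1
    exact h1
  have b62 : 0 + 0 - (sqrt2 * u06 1) = 0 := by
    have h1 := hb 0 3 6 2
    rw [hm03, hm36, hm06] at h1
    exact h1
  have b63 : sqrt2 * u03 1 + 0 - (0) = 0 := by
    have h1 := hb 0 3 6 3
    rw [hm03, hm36, hm06] at h1
    exact h1
  have b66 : -y04 0 + Matrix.trace A45 - (0) = 0 := by
    have h1 := hb 0 4 5 0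
    rw [hm04, hm45, hm05] at h1
    exact h1
  simp only [Matrix.trace_fin_two] at b66
  have b68 : -v04 + 0 - (y05 1) = 0 := by
    have h1 := hb 0 4 5 2
    rw [hm04, hm45, hm05] at h1
    exact h1
  have b71 : -A04 0 0 + 0 - (u05 1) = 0 := by
    have h1 := hb 0 4 5 5
    rw [hm04, hm45, hm05] at h1
    exact h1
  have b73 : -y04 1 + Matrix.trace A46 - (0) = 0 := by
    have h1 := hb 0 4 6 0
    rw [hm04, hm46, hm06] at h1
    exact h1
  simp only [Matrix.trace_fin_two] at b73
  have b74 : v04 + 0 - (y06 0) = 0 := by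
    have h1 := hb 0 4 6 1
    rw [hm04, hm46, hm06] at h1
    exact h1
  have b76 : sqrt2 * u04 1 + 0 - (sqrt2 * v06) = 0 := by
    have h1 := hb 0 4 6 3
    rw [hm04, hm46, hm06] at h1
    exact h1
  have b78 : -A04 1 0 + 0 - (u06 1) = 0 := by
    have h1 := hb 0 4 6 5
    rw [hm04, hm46, hm06] at h1
    exact h1
  have b79 : -A04 1 1 + 0 - (-u06 0) = 0 := by
    have h1 := hb 0 4 6 6
    rw [hm04, hm46, hm06] at h1
    exact h1
  have b80 : -y05 1 + Matrix.trace A56 - (-y06 0) = 0 := by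
    have h1 := hb 0 5 6 0
    rw [hm05, hm56, hm06] at h1
    exact h1
  simp only [Matrix.trace_fin_two] at b80
  have b81 : v05 + 0 - (0) = 0 := by
    have h1 := hb 0 5 6 1
    rw [hm05, hm56, hm06] at h1
    exact h1
  have b89 : 0 + -u24 1 - (u14 0) = 0 := by
    have h1 := hb 1 2 4 0
    rw [hm12, hm24, hm14] at h1
    exact h1
  have b90 : y12 0 + A24 0 0 - (A14 0 1) = 0 := by
    have h1 := hb 1 2 4 1
    rw [hm12, hm24, hm14] at h1
    exact h1
  have b96 : -y12 0 + -u25 1 - (u15 0) = 0 := by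
    have h1 := hb 1 2 5 0
    rw [hm12, hm25, hm15] at h1
    exact h1
  have b116 : 0 + A35 0 0 - (sqrt2 * u15 0) = 0 := by
    have h1 := hb 1 3 5 1
    rw [hm13, hm35, hm15] at h1
    exact h1
  have b130 : sqrt2 * u14 0 + 0 - (sqrt2 * v15) = 0 := by
    have h1 := hb 1 4 5 3
    rw [hm14, hm45, hm15] at h1
    exact h1
  have b132 : -A14 0 0 + 0 - (u15 1) = 0 := by
    have h1 := hb 1 4 5 5
    rw [hm14, hm45, hm15] at h1
    exact h1
  have b133 : -A14 0 1 + 0 - (-u15 0) = 0 := by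
    have h1 := hb 1 4 5 6
    rw [hm14, hm45, hm15] at h1
    exact h1
  have b140 : -A14 1 1 + 0 - (-u16 0) = 0 := by
    have h1 := hb 1 4 6 6
    rw [hm14, hm46, hm16] at h1
    exact h1
  have b142 : v15 + A56 0 0 - (0) = 0 := by
    have h1 := hb 1 5 6 1
    rw [hm15, hm56, hm16] at h1
    exact h1
  have b144 : sqrt2 * u15 1 + 0 - (sqrt2 * u16 0) = 0 := by
    have h1 := hb 1 5 6 3
    rw [hm15, hm56, hm16] at h1
    exact h1
  have b150 : sqrt2 * v23 + 0 - (0) = 0 := by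
    have h1 := hb 2 3 4 3
    rw [hm23, hm34, hm24] at h1
    exact h1
  have b156 : -v23 + A35 1 1 - (sqrt2 * u25 1) = 0 := by
    have h1 := hb 2 3 5 2
    rw [hm23, hm35, hm25] at h1
    exact h1
  have b170 : 0 + 0 - (-Matrix.trace A25) = 0 := by
    have h1 := hb 2 4 5 4
    rw [hm24, hm45, hm25] at h1
    exact h1
  simp only [Matrix.trace_fin_two] at b170
  have b171 : -A24 0 0 + 0 - (u25 1) = 0 := by
    have h1 := hb 2 4 5 5
    rw [hm24, hm45, hm25] at h1
    exact h1
  have b176 : sqrt2 * u24 1 + 0 - (sqrt2 * v26) = 0 := by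
    have h1 := hb 2 4 6 3
    rw [hm24, hm46, hm26] at h1
    exact h1
  have b182 : 0 + A56 1 1 - (-v26) = 0 := by
    have h1 := hb 2 5 6 2
    rw [hm25, hm56, hm26] at h1
    exact h1
  have tz0 : (A04 0 0) = 0 := by
    linear_combination (1/2) * b50 + ((1/2) * sqrt2) * b56 + (-1) * b71 + ((1/2) * (u05 1)) * hs2
  have tz1 : (A04 0 1) = 0 := by
    linear_combination (-1) * b29 + (-1) * b35 + ((1/2) * sqrt2) * b55 + 1 * b170 + ((1/2) * (u05 0)) * hs2
  have tz2 : (A04 1 0) = 0 := by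
    linear_combination ((1/2) * sqrt2) * b62 + (-1) * b78 + ((1/2) * (u06 1)) * hs2
  have tz3 : (A04 1 1) = 0 := by
    linear_combination (1/2) * b50 + ((-1/2) * sqrt2) * b61 + (-1) * b79 + ((-1/2) * (u06 0)) * hs2
  have tz4 : v04 = 0 := by
    linear_combination (-1/2) * b68 + (1/2) * b74 + (1/2) * b80 + (-1/2) * b89 + ((-1/4) * sqrt2) * b130 + (-1/2) * b142 + ((-1/4) * sqrt2) * b176 + (-1/2) * b182 + ((1/4) * (u14 0) + (-1/4) * v15 + (1/4) * (u24 1) + (-1/4) * v26) * hs2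
  have tz5 : (u04 0) = 0 := by
    linear_combination ((-1/2) * sqrt2) * b48 + ((-1/2) * sqrt2) * b54 + (-1) * b81 + (-1/2) * b90 + (-1/2) * b96 + ((1/2) * sqrt2) * b116 + (1/2) * b133 + (1/2) * b150 + ((1/2) * sqrt2) * b156 + (-1/2) * b171 + ((-1/2) * (u04 0) + (-1/2) * v05 + (1/2) * (u15 0) + (1/2) * (u25 1)) * hs2
  have tz6 : (u04 1) = 0 := by
    linear_combination 1 * b6 + 1 * b132 + 1 * b140 + ((1/2) * sqrt2) * b144 + ((-1/2) * (u15 1) + (1/2) * (u16 0)) * hs2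
  have tlink0 : (y04 0) = A45 0 0 + A45 1 1 := by
    linear_combination (-1) * b66
  have tlink1 : (y04 1) = A46 0 0 + A46 1 1 := by
    linear_combination (-1) * b73
  have ttr01 : A01 0 0 + A01 1 1 = 0 := by
    linear_combination (-1) * b10
  have ttr02 : A02 0 0 + A02 1 1 = 0 := by
    linear_combination (-1) * b32
  have ttr03 : A03 0 0 + A03 1 1 = 0 := by
    linear_combination (-1) * b4 + 1 * b16 + (-1) * b27 + sqrt2 * b33
  have ttr04 : A04 0 0 + A04 1 1 = 0 := by
    linear_combination 1 * b50 + ((1/2) * sqrt2) * b56 + ((-1/2) * sqrt2) * b61 + (-1) * b71 + (-1) * b79 + ((1/2) * (u05 1) + (-1/2) * (u06 0)) * hs2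
  have ttr05 : A05 0 0 + A05 1 1 = 0 := by
    linear_combination (-1) * b14 + ((-1/2) * sqrt2) * b31 + (-1) * b37 + ((1/2) * v02) * hs2
  have ttr06 : A06 0 0 + A06 1 1 = 0 := by
    linear_combination ((1/2) * sqrt2) * b9 + (-1) * b20 + (-1) * b43 + ((-1/2) * v01) * hs2
  have ttr12 : A12 0 0 + A12 1 1 = 0 := by
    linear_combination 1 * b0 + ((-1/2) * sqrt2) * b16 + (-1) * b33 + ((1/2) * (u01 0)) * hs2
  have ttr13 : A13 0 0 + A13 1 1 = 0 := by
    linear_combination 1 * b3 + (-1) * b9 + ((-1/2) * sqrt2) * b63 + ((1/2) * (u03 1)) * hs2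
  have ttr14 : A14 0 0 + A14 1 1 = 0 := by
    linear_combination (-1) * b132 + (-1) * b140 + ((-1/2) * sqrt2) * b144 + ((1/2) * (u15 1) + (-1/2) * (u16 0)) * hs2
  have ttr15 : A15 0 0 + A15 1 1 = 0 := by
    linear_combination 1 * b7 + 1 * b13 + 1 * b50 + sqrt2 * b56 + (-1) * b71 + (1 * (u05 1)) * hs2
  have ttr16 : A16 0 0 + A16 1 1 = 0 := by
    linear_combination 1 * b8 + 1 * b19 + sqrt2 * b62 + (-1) * b78 + (1 * (u06 1)) * hs2
  have ttr23 : A23 0 0 + A23 1 1 = 0 := by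
    linear_combination 1 * b25 + (-1) * b31 + ((1/2) * sqrt2) * b57 + ((-1/2) * (u03 0)) * hs2
  have ttr24 : A24 0 0 + A24 1 1 = 0 := by
    linear_combination 1 * b28 + ((-1/2) * sqrt2) * b48 + ((-1/2) * sqrt2) * b54 + (-1) * b81 + (-1/2) * b90 + (-1/2) * b96 + ((1/2) * sqrt2) * b116 + (1/2) * b133 + (1/2) * b150 + ((1/2) * sqrt2) * b156 + (-1/2) * b171 + ((-1/2) * (u04 0) + (-1/2) * v05 + (1/2) * (u15 0) + (1/2) * (u25 1)) * hs2
  have ttr25 : A25 0 0 + A25 1 1 = 0 := by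
    linear_combination 1 * b170
  have ttr26 : A26 0 0 + A26 1 1 = 0 := by
    linear_combination 1 * b30 + 1 * b41 + 1 * b50 + ((-1) * sqrt2) * b61 + (-1) * b79 + ((-1) * (u06 0)) * hs2
  have ttr34 : A34 0 0 + A34 1 1 = 0 := by
    linear_combination 1 * b47 + ((-1/2) * sqrt2) * b68 + ((1/2) * sqrt2) * b74 + ((1/2) * sqrt2) * b80 + ((-1/2) * sqrt2) * b89 + (-1/2) * b130 + ((-1/2) * sqrt2) * b142 + (-1/2) * b176 + ((-1/2) * sqrt2) * b182
  have ttr35 : A35 0 0 + A35 1 1 = 0 := by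
    linear_combination ((-1/2) * sqrt2) * b90 + ((-1/2) * sqrt2) * b96 + 1 * b116 + ((1/2) * sqrt2) * b133 + ((1/2) * sqrt2) * b150 + 1 * b156 + ((-1/2) * sqrt2) * b171 + ((-1/2) * v23) * hs2
  have ttr36 : A36 0 0 + A36 1 1 = 0 := by
    linear_combination (2 * sqrt2) * b6 + 1 * b49 + 1 * b60 + (-1) * b76 + (2 * sqrt2) * b132 + (2 * sqrt2) * b140 + 2 * b144
  have ttr56 : A56 0 0 + A56 1 1 = 0 := by
    linear_combination 1 * b89 + ((1/2) * sqrt2) * b130 + 1 * b142 + ((1/2) * sqrt2) * b176 + 1 * b182 + ((-1/2) * (u14 0) + (1/2) * v15 + (-1/2) * (u24 1) + (1/2) * v26) * hs2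
  have hA04 : A04 = 0 := by
    ext i j
    fin_cases i <;> fin_cases j
    · exact tz0
    · exact tz1
    · exact tz2
    · exact tz3
  have hu04 : u04 = 0 := by
    funext i; fin_cases i
    · exact tz5
    · exact tz6
  have hy04 : y04 = ![A45 0 0 + A45 1 1, A46 0 0 + A46 1 1] := by
    funext i; fin_cases i
    · exact tlink0
    · exact tlink1
  refine ⟨![A45 0 0 + A45 1 1, A46 0 0 + A46 1 1], ?_, ?_⟩
  · intro hz
    have h45 : A45 0 0 + A45 1 1 = 0 := by simpa using congrFun hz 0
    have h46 : A46 0 0 + A46 1 1 = 0 := by simpa using congrFun hz 1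
    have hall : ∀ i j : Fin 7, R (stdB i) (stdB j) 0 0 = 0 := by
      intro i j
      fin_cases i <;> fin_cases j
      · show R (stdB 0) (stdB 0) 0 0 = 0
        rw [hRalt]; rfl
      · show R (stdB 0) (stdB 1) 0 0 = 0
        rw [hm01]
        show Matrix.trace A01 = 0
        rw [Matrix.trace_fin_two]; exact ttr01
      · show R (stdB 0) (stdB 2) 0 0 = 0
        rw [hm02]
        show Matrix.trace A02 = 0
        rw [Matrix.trace_fin_two]; exact ttr02
      · show R (stdB 0) (stdB 3) 0 0 = 0
        rw [hm03]
        show Matrix.trace A03 = 0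
        rw [Matrix.trace_fin_two]; exact ttr03
      · show R (stdB 0) (stdB 4) 0 0 = 0
        rw [hm04]
        show Matrix.trace A04 = 0
        rw [Matrix.trace_fin_two]; exact ttr04
      · show R (stdB 0) (stdB 5) 0 0 = 0
        rw [hm05]
        show Matrix.trace A05 = 0
        rw [Matrix.trace_fin_two]; exact ttr05
      · show R (stdB 0) (stdB 6) 0 0 = 0
        rw [hm06]
        show Matrix.trace A06 = 0
        rw [Matrix.trace_fin_two]; exact ttr06
      · show R (stdB 1) (stdB 0) 0 0 = 0
        rw [hanti (stdB 0) (stdB 1), Matrix.neg_apply, hm01]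
        show -Matrix.trace A01 = 0
        rw [Matrix.trace_fin_two]
        exact neg_eq_zero.mpr ttr01
      · show R (stdB 1) (stdB 1) 0 0 = 0
        rw [hRalt]; rfl
      · show R (stdB 1) (stdB 2) 0 0 = 0
        rw [hm12]
        show Matrix.trace A12 = 0
        rw [Matrix.trace_fin_two]; exact ttr12
      · show R (stdB 1) (stdB 3) 0 0 = 0
        rw [hm13]
        show Matrix.trace A13 = 0
        rw [Matrix.trace_fin_two]; exact ttr13
      · show R (stdB 1) (stdB 4) 0 0 = 0
        rw [hm14]
        show Matrix.trace A14 = 0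
        rw [Matrix.trace_fin_two]; exact ttr14
      · show R (stdB 1) (stdB 5) 0 0 = 0
        rw [hm15]
        show Matrix.trace A15 = 0
        rw [Matrix.trace_fin_two]; exact ttr15
      · show R (stdB 1) (stdB 6) 0 0 = 0
        rw [hm16]
        show Matrix.trace A16 = 0
        rw [Matrix.trace_fin_two]; exact ttr16
      · show R (stdB 2) (stdB 0) 0 0 = 0
        rw [hanti (stdB 0) (stdB 2), Matrix.neg_apply, hm02]
        show -Matrix.trace A02 = 0
        rw [Matrix.trace_fin_two]
        exact neg_eq_zero.mpr ttr02
      · show R (stdB 2) (stdB 1) 0 0 = 0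
        rw [hanti (stdB 1) (stdB 2), Matrix.neg_apply, hm12]
        show -Matrix.trace A12 = 0
        rw [Matrix.trace_fin_two]
        exact neg_eq_zero.mpr ttr12
      · show R (stdB 2) (stdB 2) 0 0 = 0
        rw [hRalt]; rfl
      · show R (stdB 2) (stdB 3) 0 0 = 0
        rw [hm23]
        show Matrix.trace A23 = 0
        rw [Matrix.trace_fin_two]; exact ttr23
      · show R (stdB 2) (stdB 4) 0 0 = 0
        rw [hm24]
        show Matrix.trace A24 = 0
        rw [Matrix.trace_fin_two]; exact ttr24
      · show R (stdB 2) (stdB 5) 0 0 = 0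
        rw [hm25]
        show Matrix.trace A25 = 0
        rw [Matrix.trace_fin_two]; exact ttr25
      · show R (stdB 2) (stdB 6) 0 0 = 0
        rw [hm26]
        show Matrix.trace A26 = 0
        rw [Matrix.trace_fin_two]; exact ttr26
      · show R (stdB 3) (stdB 0) 0 0 = 0
        rw [hanti (stdB 0) (stdB 3), Matrix.neg_apply, hm03]
        show -Matrix.trace A03 = 0
        rw [Matrix.trace_fin_two]
        exact neg_eq_zero.mpr ttr03
      · show R (stdB 3) (stdB 1) 0 0 = 0
        rw [hanti (stdB 1) (stdB 3), Matrix.neg_apply, hm13]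
        show -Matrix.trace A13 = 0
        rw [Matrix.trace_fin_two]
        exact neg_eq_zero.mpr ttr13
      · show R (stdB 3) (stdB 2) 0 0 = 0
        rw [hanti (stdB 2) (stdB 3), Matrix.neg_apply, hm23]
        show -Matrix.trace A23 = 0
        rw [Matrix.trace_fin_two]
        exact neg_eq_zero.mpr ttr23
      · show R (stdB 3) (stdB 3) 0 0 = 0
        rw [hRalt]; rfl
      · show R (stdB 3) (stdB 4) 0 0 = 0
        rw [hm34]
        show Matrix.trace A34 = 0
        rw [Matrix.trace_fin_two]; exact ttr34
      · show R (stdB 3) (stdB 5) 0 0 = 0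
        rw [hm35]
        show Matrix.trace A35 = 0
        rw [Matrix.trace_fin_two]; exact ttr35
      · show R (stdB 3) (stdB 6) 0 0 = 0
        rw [hm36]
        show Matrix.trace A36 = 0
        rw [Matrix.trace_fin_two]; exact ttr36
      · show R (stdB 4) (stdB 0) 0 0 = 0
        rw [hanti (stdB 0) (stdB 4), Matrix.neg_apply, hm04]
        show -Matrix.trace A04 = 0
        rw [Matrix.trace_fin_two]
        exact neg_eq_zero.mpr ttr04
      · show R (stdB 4) (stdB 1) 0 0 = 0
        rw [hanti (stdB 1) (stdB 4), Matrix.neg_apply, hm14]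
        show -Matrix.trace A14 = 0
        rw [Matrix.trace_fin_two]
        exact neg_eq_zero.mpr ttr14
      · show R (stdB 4) (stdB 2) 0 0 = 0
        rw [hanti (stdB 2) (stdB 4), Matrix.neg_apply, hm24]
        show -Matrix.trace A24 = 0
        rw [Matrix.trace_fin_two]
        exact neg_eq_zero.mpr ttr24
      · show R (stdB 4) (stdB 3) 0 0 = 0
        rw [hanti (stdB 3) (stdB 4), Matrix.neg_apply, hm34]
        show -Matrix.trace A34 = 0
        rw [Matrix.trace_fin_two]
        exact neg_eq_zero.mpr ttr34
      · show R (stdB 4) (stdB 4) 0 0 = 0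
        rw [hRalt]; rfl
      · show R (stdB 4) (stdB 5) 0 0 = 0
        rw [hm45]
        show Matrix.trace A45 = 0
        rw [Matrix.trace_fin_two]; exact h45
      · show R (stdB 4) (stdB 6) 0 0 = 0
        rw [hm46]
        show Matrix.trace A46 = 0
        rw [Matrix.trace_fin_two]; exact h46
      · show R (stdB 5) (stdB 0) 0 0 = 0
        rw [hanti (stdB 0) (stdB 5), Matrix.neg_apply, hm05]
        show -Matrix.trace A05 = 0
        rw [Matrix.trace_fin_two]
        exact neg_eq_zero.mpr ttr05
      · show R (stdB 5) (stdB 1) 0 0 = 0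
        rw [hanti (stdB 1) (stdB 5), Matrix.neg_apply, hm15]
        show -Matrix.trace A15 = 0
        rw [Matrix.trace_fin_two]
        exact neg_eq_zero.mpr ttr15
      · show R (stdB 5) (stdB 2) 0 0 = 0
        rw [hanti (stdB 2) (stdB 5), Matrix.neg_apply, hm25]
        show -Matrix.trace A25 = 0
        rw [Matrix.trace_fin_two]
        exact neg_eq_zero.mpr ttr25
      · show R (stdB 5) (stdB 3) 0 0 = 0
        rw [hanti (stdB 3) (stdB 5), Matrix.neg_apply, hm35]
        show -Matrix.trace A35 = 0
        rw [Matrix.trace_fin_two]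
        exact neg_eq_zero.mpr ttr35
      · show R (stdB 5) (stdB 4) 0 0 = 0
        rw [hanti (stdB 4) (stdB 5), Matrix.neg_apply, hm45]
        show -Matrix.trace A45 = 0
        rw [Matrix.trace_fin_two]
        exact neg_eq_zero.mpr h45
      · show R (stdB 5) (stdB 5) 0 0 = 0
        rw [hRalt]; rfl
      · show R (stdB 5) (stdB 6) 0 0 = 0
        rw [hm56]
        show Matrix.trace A56 = 0
        rw [Matrix.trace_fin_two]; exact ttr56
      · show R (stdB 6) (stdB 0) 0 0 = 0
        rw [hanti (stdB 0) (stdB 6), Matrix.neg_apply, hm06]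
        show -Matrix.trace A06 = 0
        rw [Matrix.trace_fin_two]
        exact neg_eq_zero.mpr ttr06
      · show R (stdB 6) (stdB 1) 0 0 = 0
        rw [hanti (stdB 1) (stdB 6), Matrix.neg_apply, hm16]
        show -Matrix.trace A16 = 0
        rw [Matrix.trace_fin_two]
        exact neg_eq_zero.mpr ttr16
      · show R (stdB 6) (stdB 2) 0 0 = 0
        rw [hanti (stdB 2) (stdB 6), Matrix.neg_apply, hm26]
        show -Matrix.trace A26 = 0
        rw [Matrix.trace_fin_two]
        exact neg_eq_zero.mpr ttr26
      · show R (stdB 6) (stdB 3) 0 0 = 0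
        rw [hanti (stdB 3) (stdB 6), Matrix.neg_apply, hm36]
        show -Matrix.trace A36 = 0
        rw [Matrix.trace_fin_two]
        exact neg_eq_zero.mpr ttr36
      · show R (stdB 6) (stdB 4) 0 0 = 0
        rw [hanti (stdB 4) (stdB 6), Matrix.neg_apply, hm46]
        show -Matrix.trace A46 = 0
        rw [Matrix.trace_fin_two]
        exact neg_eq_zero.mpr h46
      · show R (stdB 6) (stdB 5) 0 0 = 0
        rw [hanti (stdB 5) (stdB 6), Matrix.neg_apply, hm56]
        show -Matrix.trace A56 = 0
        rw [Matrix.trace_fin_two]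
        exact neg_eq_zero.mpr ttr56
      · show R (stdB 6) (stdB 6) 0 0 = 0
        rw [hRalt]; rfl
    have hxe : ∀ x : V7, x = ∑ i : Fin 7, x i • stdB i := by
      intro x; funext j
      simp [stdB, Pi.single_apply]
    have hRsum : R xw yw = ∑ i : Fin 7, ∑ j : Fin 7, (xw i * yw j) • R (stdB i) (stdB j) := by
      conv_lhs => rw [hxe xw, hxe yw]
      simp only [map_sum, map_smul, LinearMap.sum_apply, LinearMap.smul_apply,
        Finset.smul_sum, smul_smul]
      rw [Finset.sum_comm]
      exact Finset.sum_congr rfl fun i _ => Finset.sum_congr rfl fun j _ => by rw [mul_comm]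
    apply hxy
    rw [hRsum]
    simp [Matrix.sum_apply, Matrix.smul_apply, hall]
  · have hEq : R (stdB 0) (stdB 4) = hImat 0 0 0 ![A45 0 0 + A45 1 1, A46 0 0 + A46 1 1] := by
      rw [hm04, hA04, tz4, hu04, hy04]
    rw [← hEq]
    exact hRmem (stdB 0) (stdB 4)
end
end

section
/- Every nonzero p ∈ P₃ is projectively equivalent to exactly one of the four polynomials x³, x²y, x(x² + y²), x(x² − y²); that is, the lines spanned by these four polynomials form a complete system of representatives of the orbit space of the GL(2,ℝ)-action on the projective space ℙ(P₃). -/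
noncomputable section

open scoped Matrix

attribute [local instance 100] LieRing.ofAssociativeRing

open MvPolynomial

lemma eval_polyAct (A : M2) (p : Poly2) (v : Fin 2 → ℝ) :
    eval v (polyAct A p) = eval (fun i => v 0 * A 0 i + v 1 * A 1 i) p := by
  induction p using MvPolynomial.induction_on with
  | C a => simp [polyAct]
  | add p q hp hq => simp only [polyAct, map_add] at *; rw [hp, hq]
  | mul_X p i hp =>
      simp only [polyAct, map_mul, aeval_X] at *
      rw [hp]
      simp [Px, Py, mul_comm]

lemma polyAct_smul (A : M2) (c : ℝ) (p : Poly2) : polyAct A (c • p) = c • polyAct A p :=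
  map_smul (aeval _) c p

lemma polyAct_one (p : Poly2) : polyAct 1 p = p := by
  apply MvPolynomial.funext; intro v
  rw [eval_polyAct]
  have : (fun i => v 0 * (1:M2) 0 i + v 1 * (1:M2) 1 i) = v := by
    funext i; fin_cases i <;> simp [Matrix.one_apply]
  rw [this]

lemma polyAct_polyAct (A B : M2) (p : Poly2) :
    polyAct B (polyAct A p) = polyAct (B * A) p := by
  apply MvPolynomial.funext; intro v
  rw [eval_polyAct, eval_polyAct, eval_polyAct]
  have : (fun i => (v 0 * B 0 0 + v 1 * B 1 0) * A 0 i + (v 0 * B 0 1 + v 1 * B 1 1) * A 1 i)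
      = (fun i => v 0 * (B * A) 0 i + v 1 * (B * A) 1 i) := by
    funext i; simp [Matrix.mul_apply, Fin.sum_univ_two]; ring
  rw [this]

lemma ProjEquiv.refl (p : Poly2) : ProjEquiv p p :=
  ⟨1, isUnit_one, 1, one_ne_zero, by rw [polyAct_one, one_smul]⟩

lemma ProjEquiv.symm {p q : Poly2} (h : ProjEquiv p q) : ProjEquiv q p := by
  obtain ⟨A, hA, c, hc, h⟩ := h
  have hd : IsUnit A.det := (Matrix.isUnit_iff_isUnit_det A).1 hA
  refine ⟨A⁻¹, Matrix.isUnit_nonsing_inv_iff.2 hA, c⁻¹, inv_ne_zero hc, ?_⟩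
  have h2 : polyAct A⁻¹ (polyAct A p) = p := by
    rw [polyAct_polyAct, Matrix.nonsing_inv_mul A hd, polyAct_one]
  rw [h, polyAct_smul] at h2
  rw [← h2, smul_smul, inv_mul_cancel₀ hc, one_smul]

lemma ProjEquiv.trans {p q r : Poly2} (h1 : ProjEquiv p q) (h2 : ProjEquiv q r) :
    ProjEquiv p r := by
  obtain ⟨A, hA, c, hc, h1⟩ := h1
  obtain ⟨B, hB, d, hd, h2⟩ := h2
  exact ⟨B * A, hB.mul hA, c * d, mul_ne_zero hc hd, by
    rw [← polyAct_polyAct, h1, polyAct_smul, h2, smul_smul]⟩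

lemma ProjEquiv.ne_zero {p q : Poly2} (h : ProjEquiv p q) (hp : p ≠ 0) : q ≠ 0 := by
  obtain ⟨A, hA, c, hc, h⟩ := h.symm
  intro h0
  rw [h0] at h
  simp only [polyAct, map_zero] at h
  have := congrArg (fun r : Poly2 => c⁻¹ • r) h
  simp only [smul_zero, smul_smul, inv_mul_cancel₀ hc, one_smul] at this
  exact hp this.symm

lemma fin2_finsupp_eq (m : Fin 2 →₀ ℕ) :
    m = Finsupp.single 0 (m 0) + Finsupp.single 1 (m 1) := by
  ext i; fin_cases i <;> simp [Finsupp.single_apply]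

lemma fin2_degree (m : Fin 2 →₀ ℕ) : m.degree = m 0 + m 1 := by
  rw [Finsupp.degree_eq_weight_one]
  simp [Finsupp.weight_apply, Finsupp.sum_fintype, Fin.sum_univ_two]

lemma pairEq (i j k l : ℕ) :
    (Finsupp.single (0 : Fin 2) i + Finsupp.single 1 j
      = Finsupp.single 0 k + Finsupp.single 1 l) ↔ (i = k ∧ j = l) := by
  constructor
  · intro h
    have h0 := DFunLike.congr_fun h 0
    have h1 := DFunLike.congr_fun h 1
    simp [Finsupp.single_apply] at h0 h1
    exact ⟨h0, h1⟩
  · rintro ⟨rfl, rfl⟩; rfl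

lemma cubic_repr (p : Poly2) (hp : p.IsHomogeneous 3) :
    p = C (p.coeff (Finsupp.single 0 3)) * Px^3
      + C (p.coeff (Finsupp.single 0 2 + Finsupp.single 1 1)) * (Px^2*Py)
      + C (p.coeff (Finsupp.single 0 1 + Finsupp.single 1 2)) * (Px*Py^2)
      + C (p.coeff (Finsupp.single 1 3)) * Py^3 := by
  have hmon : ∀ (i j : ℕ), (Px^i * Py^j : Poly2)
      = monomial (Finsupp.single 0 i + Finsupp.single 1 j) 1 := by
    intro i j
    rw [Px, Py, X_pow_eq_monomial, X_pow_eq_monomial, monomial_mul, one_mul]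
  have e30 : p.coeff (Finsupp.single 0 3)
      = p.coeff (Finsupp.single 0 3 + Finsupp.single 1 0) := by simp
  have e03 : p.coeff (Finsupp.single 1 3)
      = p.coeff (Finsupp.single 0 0 + Finsupp.single 1 3) := by simp
  have h3 : (Px^3 : Poly2) = monomial (Finsupp.single 0 3 + Finsupp.single 1 0) 1 := by
    rw [← hmon 3 0]; ring
  have h0 : (Py^3 : Poly2) = monomial (Finsupp.single 0 0 + Finsupp.single 1 3) 1 := by
    rw [← hmon 0 3]; ring
  have h21 : (Px^2 * Py : Poly2) = monomial (Finsupp.single 0 2 + Finsupp.single 1 1) 1 := by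
    rw [← hmon 2 1]; ring
  have h12 : (Px * Py^2 : Poly2) = monomial (Finsupp.single 0 1 + Finsupp.single 1 2) 1 := by
    rw [← hmon 1 2]; ring
  ext m
  rw [e30, e03]
  simp only [coeff_add, coeff_C_mul, h3, h0, h21, h12, coeff_monomial, mul_ite, mul_one, mul_zero]
  by_cases hd : m.degree = 3
  · have hm := fin2_finsupp_eq m
    rw [fin2_degree] at hd
    have h0le : m 0 ≤ 3 := by omega
    interval_cases h : (m 0) <;>
      [ (have h1 : m 1 = 3 := by omega); (have h1 : m 1 = 2 := by omega);
        (have h1 : m 1 = 1 := by omega); (have h1 : m 1 = 0 := by omega)] <;>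
      · rw [h1] at hm
        rw [hm]
        simp only [pairEq]
        norm_num
  · have hne : ∀ (i j : ℕ), i + j = 3 →
        Finsupp.single (0 : Fin 2) i + Finsupp.single 1 j ≠ m := by
      intro i j hij hne
      apply hd
      rw [← hne, fin2_degree]
      simp [Finsupp.single_apply, hij]
    rw [if_neg (hne 3 0 rfl), if_neg (hne 2 1 rfl), if_neg (hne 1 2 rfl),
      if_neg (hne 0 3 rfl), hp.coeff_eq_zero hd]
    norm_num

lemma cubic_root_exists (a b c d : ℝ) (ha : a ≠ 0) :
    ∃ t : ℝ, a*t^3 + b*t^2 + c*t + d = 0 := by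
  have key : ∀ a b c d : ℝ, 0 < a → ∃ t : ℝ, a*t^3 + b*t^2 + c*t + d = 0 := by
    intro a b c d ha
    obtain ⟨M, hM⟩ : ∃ M : ℝ, M = (|b| + |c| + |d|)/a + 1 := ⟨_, rfl⟩
    have hdiv : 0 ≤ (|b| + |c| + |d|)/a := by positivity
    have hM1 : 1 ≤ M := by rw [hM]; linarith
    have hMpos : 0 < M := by linarith
    have hM2 : M ≤ M^2 := by nlinarith
    have h1M : 1 ≤ M^2 := by nlinarith
    have hS : |b| + |c| + |d| = a * (M - 1) := by
      rw [hM]; field_simp; ring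
    have hSM : (|b| + |c| + |d|) * M^2 = a*M^3 - a*M^2 := by rw [hS]; ring
    have e1 : -|b| * M^2 ≤ b * M^2 := mul_le_mul_of_nonneg_right (neg_abs_le b) (sq_nonneg M)
    have e1' : b * M^2 ≤ |b| * M^2 := mul_le_mul_of_nonneg_right (le_abs_self b) (sq_nonneg M)
    have e2a : -|c| * M ≤ c * M := mul_le_mul_of_nonneg_right (neg_abs_le c) hMpos.le
    have e2b : c * M ≤ |c| * M := mul_le_mul_of_nonneg_right (le_abs_self c) hMpos.le
    have e2c : |c| * M ≤ |c| * M^2 := mul_le_mul_of_nonneg_left hM2 (abs_nonneg c)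
    have e3 : |d| * 1 ≤ |d| * M^2 := mul_le_mul_of_nonneg_left h1M (abs_nonneg d)
    have e3a : -|d| ≤ d := neg_abs_le d
    have e3b : d ≤ |d| := le_abs_self d
    have haM : 0 ≤ a * M^2 := by positivity
    have hcont : Continuous (fun t : ℝ => a*t^3 + b*t^2 + c*t + d) := by fun_prop
    have hfM : 0 ≤ a*M^3 + b*M^2 + c*M + d := by linarith
    have hfm : a*(-M)^3 + b*(-M)^2 + c*(-M) + d ≤ 0 := by
      have : a*(-M)^3 + b*(-M)^2 + c*(-M) + d = -(a*M^3) + b*M^2 - c*M + d := by ring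
      rw [this]; linarith
    obtain ⟨t, _, ht⟩ := intermediate_value_Icc (by linarith : (-M) ≤ M)
      hcont.continuousOn ⟨hfm, hfM⟩
    exact ⟨t, ht⟩
  rcases lt_or_gt_of_ne ha with h | h
  · obtain ⟨t, ht⟩ := key (-a) (-b) (-c) (-d) (by linarith)
    exact ⟨t, by linarith⟩
  · exact key a b c d h

lemma eval_form (a b c d : ℝ) (v : Fin 2 → ℝ) :
    eval v (C a*Px^3 + C b*(Px^2*Py) + C c*(Px*Py^2) + C d*Py^3)
      = a*(v 0)^3 + b*(v 0)^2*(v 1) + c*(v 0)*(v 1)^2 + d*(v 1)^3 := by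
  simp [Px, Py]; ring

lemma polyAct_homog (A : M2) (p : Poly2) (hp : p.IsHomogeneous 3) :
    (polyAct A p).IsHomogeneous 3 := by
  have := hp.aeval (fun i => A 0 i • Px + A 1 i • Py) (n := 1) ?_
  · simpa [polyAct] using this
  · intro i
    have h1 : (A 0 i • Px : Poly2) = C (A 0 i) * X 0 := by
      rw [smul_eq_C_mul]; rfl
    have h2 : (A 1 i • Py : Poly2) = C (A 1 i) * X 1 := by
      rw [smul_eq_C_mul]; rfl
    show ((A 0 i • Px + A 1 i • Py : Poly2)).IsHomogeneous 1
    rw [h1, h2]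
    exact (isHomogeneous_C_mul_X _ _).add (isHomogeneous_C_mul_X _ _)

lemma exists_cbrt (x : ℝ) : ∃ t : ℝ, t^3 = x := by
  rcases le_or_gt 0 x with h | h
  · refine ⟨x ^ ((1:ℝ)/3), ?_⟩
    rw [← Real.rpow_natCast (x ^ ((1:ℝ)/3)) 3, ← Real.rpow_mul h]
    norm_num
  · obtain ⟨t, ht⟩ : ∃ t : ℝ, t^3 = -x := by
      refine ⟨(-x) ^ ((1:ℝ)/3), ?_⟩
      rw [← Real.rpow_natCast ((-x) ^ ((1:ℝ)/3)) 3, ← Real.rpow_mul (by linarith)]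
      norm_num
    exact ⟨-t, by rw [neg_pow]; rw [ht]; ring⟩
def hasZ2 (q : Poly2) : Prop :=
  ∃ v w : Fin 2 → ℝ, MvPolynomial.eval v q = 0 ∧ MvPolynomial.eval w q = 0 ∧
    v 0 * w 1 - v 1 * w 0 ≠ 0

def hasZ3 (q : Poly2) : Prop :=
  ∃ u v w : Fin 2 → ℝ, MvPolynomial.eval u q = 0 ∧ MvPolynomial.eval v q = 0 ∧
    MvPolynomial.eval w q = 0 ∧ u 0 * v 1 - u 1 * v 0 ≠ 0 ∧
    u 0 * w 1 - u 1 * w 0 ≠ 0 ∧ v 0 * w 1 - v 1 * w 0 ≠ 0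

def isCube (q : Poly2) : Prop :=
  ∃ a b : ℝ, q = (MvPolynomial.C a * Px + MvPolynomial.C b * Py)^3

lemma det_ne_zero_of_isUnit {A : M2} (hA : IsUnit A) :
    A 0 0 * A 1 1 - A 0 1 * A 1 0 ≠ 0 := by
  have := ((Matrix.isUnit_iff_isUnit_det A).1 hA).ne_zero
  rwa [Matrix.det_fin_two] at this

lemma zero_pull {p q : Poly2} {A : M2} {c : ℝ} (hc : c ≠ 0)
    (hEq : polyAct A p = c • q) (v : Fin 2 → ℝ) (hv : eval v q = 0) :
    eval (fun i => v 0 * A 0 i + v 1 * A 1 i) p = 0 := by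
  rw [← eval_polyAct, hEq, smul_eval, hv, mul_zero]

lemma hasZ2_of_equiv {p q : Poly2} (h : ProjEquiv p q) (h2 : hasZ2 q) : hasZ2 p := by
  obtain ⟨A, hA, c, hc, hEq⟩ := h
  obtain ⟨v, w, hv, hw, hd⟩ := h2
  have hAd := det_ne_zero_of_isUnit hA
  refine ⟨fun i => v 0 * A 0 i + v 1 * A 1 i, fun i => w 0 * A 0 i + w 1 * A 1 i,
    zero_pull hc hEq v hv, zero_pull hc hEq w hw, ?_⟩
  have : (v 0 * A 0 0 + v 1 * A 1 0) * (w 0 * A 0 1 + w 1 * A 1 1)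
      - (v 0 * A 0 1 + v 1 * A 1 1) * (w 0 * A 0 0 + w 1 * A 1 0)
      = (v 0 * w 1 - v 1 * w 0) * (A 0 0 * A 1 1 - A 0 1 * A 1 0) := by ring
  rw [this]
  exact mul_ne_zero hd hAd

lemma hasZ3_of_equiv {p q : Poly2} (h : ProjEquiv p q) (h3 : hasZ3 q) : hasZ3 p := by
  obtain ⟨A, hA, c, hc, hEq⟩ := h
  obtain ⟨u, v, w, hu, hv, hw, d1, d2, d3⟩ := h3
  have hAd := det_ne_zero_of_isUnit hA
  have key : ∀ x y : Fin 2 → ℝ, x 0 * y 1 - x 1 * y 0 ≠ 0 →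
      (x 0 * A 0 0 + x 1 * A 1 0) * (y 0 * A 0 1 + y 1 * A 1 1)
      - (x 0 * A 0 1 + x 1 * A 1 1) * (y 0 * A 0 0 + y 1 * A 1 0) ≠ 0 := by
    intro x y hxy
    have : (x 0 * A 0 0 + x 1 * A 1 0) * (y 0 * A 0 1 + y 1 * A 1 1)
        - (x 0 * A 0 1 + x 1 * A 1 1) * (y 0 * A 0 0 + y 1 * A 1 0)
        = (x 0 * y 1 - x 1 * y 0) * (A 0 0 * A 1 1 - A 0 1 * A 1 0) := by ring
    rw [this]; exact mul_ne_zero hxy hAd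
  exact ⟨fun i => u 0 * A 0 i + u 1 * A 1 i, fun i => v 0 * A 0 i + v 1 * A 1 i,
    fun i => w 0 * A 0 i + w 1 * A 1 i,
    zero_pull hc hEq u hu, zero_pull hc hEq v hv, zero_pull hc hEq w hw,
    key u v d1, key u w d2, key v w d3⟩

lemma isCube_of_equiv {p q : Poly2} (h : ProjEquiv p q) (hC : isCube p) : isCube q := by
  obtain ⟨A, hA, c, hc, hEq⟩ := h
  obtain ⟨a, b, hab⟩ := hC
  obtain ⟨t, ht⟩ := exists_cbrt c⁻¹
  have hL : polyAct A (C a * Px + C b * Py)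
      = C (a * A 0 0 + b * A 0 1) * Px + C (a * A 1 0 + b * A 1 1) * Py := by
    apply MvPolynomial.funext; intro v
    rw [eval_polyAct]
    simp [Px, Py]
    ring
  have hq : q = c⁻¹ • polyAct A p := by
    rw [hEq, smul_smul, inv_mul_cancel₀ hc, one_smul]
  refine ⟨t * (a * A 0 0 + b * A 0 1), t * (a * A 1 0 + b * A 1 1), ?_⟩
  rw [hq, hab]
  have : polyAct A ((C a * Px + C b * Py)^3) = (polyAct A (C a * Px + C b * Py))^3 :=
    map_pow (aeval _) _ 3
  rw [this, hL, smul_eq_C_mul, ← ht]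
  simp only [map_mul, map_pow]
  ring
lemma sq_sum_zero {x y : ℝ} (h : x^2 + y^2 = 0) : x = 0 := by
  have h1 : x^2 ≤ 0 := by nlinarith [sq_nonneg y]
  have h2 : x^2 = 0 := le_antisymm h1 (sq_nonneg x)
  exact (pow_eq_zero_iff two_ne_zero).1 h2

lemma cube_zero {x : ℝ} (h : x^3 = 0) : x = 0 :=
  (pow_eq_zero_iff three_ne_zero).1 h

lemma eval_Px3 (v : Fin 2 → ℝ) : eval v (Px^3) = (v 0)^3 := by simp [Px]
lemma eval_Px2Py (v : Fin 2 → ℝ) : eval v (Px^2*Py) = (v 0)^2 * v 1 := by simp [Px, Py]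
lemma eval_Pplus (v : Fin 2 → ℝ) :
    eval v (Px*(Px^2+Py^2)) = v 0 * ((v 0)^2 + (v 1)^2) := by simp [Px, Py]
lemma eval_Pminus (v : Fin 2 → ℝ) :
    eval v (Px*(Px^2-Py^2)) = v 0 * ((v 0)^2 - (v 1)^2) := by simp [Px, Py]

lemma notZ2_Px3 : ¬ hasZ2 (Px^3) := by
  rintro ⟨v, w, hv, hw, hd⟩
  rw [eval_Px3] at hv; rw [eval_Px3] at hw
  exact hd (by rw [cube_zero hv, cube_zero hw]; ring)

lemma notZ2_Pplus : ¬ hasZ2 (Px*(Px^2+Py^2)) := by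
  rintro ⟨v, w, hv, hw, hd⟩
  rw [eval_Pplus] at hv; rw [eval_Pplus] at hw
  have hv0 : v 0 = 0 := by
    rcases mul_eq_zero.1 hv with h | h
    · exact h
    · exact sq_sum_zero h
  have hw0 : w 0 = 0 := by
    rcases mul_eq_zero.1 hw with h | h
    · exact h
    · exact sq_sum_zero h
  exact hd (by rw [hv0, hw0]; ring)

lemma Z2_Px2Py : hasZ2 (Px^2*Py) :=
  ⟨![0,1], ![1,0], by rw [eval_Px2Py]; norm_num, by rw [eval_Px2Py]; norm_num, by norm_num⟩

lemma Z2_Pminus : hasZ2 (Px*(Px^2-Py^2)) :=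
  ⟨![0,1], ![1,1], by rw [eval_Pminus]; norm_num, by rw [eval_Pminus]; norm_num, by norm_num⟩

lemma notZ3_Px2Py : ¬ hasZ3 (Px^2*Py) := by
  rintro ⟨u, v, w, hu, hv, hw, d1, d2, d3⟩
  rw [eval_Px2Py] at hu hv hw
  have hu' : u 0 = 0 ∨ u 1 = 0 := by
    rcases mul_eq_zero.1 hu with h | h
    · exact Or.inl ((pow_eq_zero_iff two_ne_zero).1 h)
    · exact Or.inr h
  have hv' : v 0 = 0 ∨ v 1 = 0 := by
    rcases mul_eq_zero.1 hv with h | h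
    · exact Or.inl ((pow_eq_zero_iff two_ne_zero).1 h)
    · exact Or.inr h
  have hw' : w 0 = 0 ∨ w 1 = 0 := by
    rcases mul_eq_zero.1 hw with h | h
    · exact Or.inl ((pow_eq_zero_iff two_ne_zero).1 h)
    · exact Or.inr h
  rcases hu' with h1 | h1 <;> rcases hv' with h2 | h2 <;> rcases hw' with h3 | h3
  · exact d1 (by rw [h1, h2]; ring)
  · exact d1 (by rw [h1, h2]; ring)
  · exact d2 (by rw [h1, h3]; ring)
  · exact d3 (by rw [h2, h3]; ring)
  · exact d3 (by rw [h2, h3]; ring)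
  · exact d2 (by rw [h1, h3]; ring)
  · exact d1 (by rw [h1, h2]; ring)
  · exact d1 (by rw [h1, h2]; ring)

lemma Z3_Pminus : hasZ3 (Px*(Px^2-Py^2)) := by
  refine ⟨![0,1], ![1,1], ![1,-1], ?_, ?_, ?_, ?_, ?_, ?_⟩ <;>
    first
      | (rw [eval_Pminus]; norm_num)
      | norm_num

lemma cube_Px3 : isCube (Px^3) := ⟨1, 0, by simp⟩

lemma notCube_Pplus : ¬ isCube (Px*(Px^2+Py^2)) := by
  rintro ⟨a, b, h⟩
  have h1 := congrArg (eval ![0,1]) h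
  have h2 := congrArg (eval ![1,0]) h
  have h3 := congrArg (eval ![1,1]) h
  rw [eval_Pplus] at h1 h2 h3
  simp [Px, Py] at h1 h2 h3
  have hb : b = 0 := cube_zero h1.symm
  rw [hb, add_zero] at h3
  linarith
lemma reps_eq {q q' : Poly2}
    (hq : q = Px^3 ∨ q = Px^2*Py ∨ q = Px*(Px^2+Py^2) ∨ q = Px*(Px^2-Py^2))
    (hq' : q' = Px^3 ∨ q' = Px^2*Py ∨ q' = Px*(Px^2+Py^2) ∨ q' = Px*(Px^2-Py^2))
    (h : ProjEquiv q q') : q = q' := by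
  rcases hq with rfl | rfl | rfl | rfl <;> rcases hq' with rfl | rfl | rfl | rfl
  · rfl
  · exact absurd (hasZ2_of_equiv h Z2_Px2Py) notZ2_Px3
  · exact absurd (isCube_of_equiv h cube_Px3) notCube_Pplus
  · exact absurd (hasZ2_of_equiv h Z2_Pminus) notZ2_Px3
  · exact absurd (hasZ2_of_equiv h.symm Z2_Px2Py) notZ2_Px3
  · rfl
  · exact absurd (hasZ2_of_equiv h.symm Z2_Px2Py) notZ2_Pplus
  · exact absurd (hasZ3_of_equiv h Z3_Pminus) notZ3_Px2Py
  · exact absurd (isCube_of_equiv h.symm cube_Px3) notCube_Pplus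
  · exact absurd (hasZ2_of_equiv h Z2_Px2Py) notZ2_Pplus
  · rfl
  · exact absurd (hasZ2_of_equiv h Z2_Pminus) notZ2_Pplus
  · exact absurd (hasZ2_of_equiv h.symm Z2_Pminus) notZ2_Px3
  · exact absurd (hasZ3_of_equiv h.symm Z3_Pminus) notZ3_Px2Py
  · exact absurd (hasZ2_of_equiv h.symm Z2_Pminus) notZ2_Pplus
  · rfl
lemma isUnit_of_det {A : M2} (h : A 0 0 * A 1 1 - A 0 1 * A 1 0 ≠ 0) : IsUnit A := by
  rw [Matrix.isUnit_iff_isUnit_det, Matrix.det_fin_two]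
  exact isUnit_iff_ne_zero.2 h

lemma exists_rep (p : Poly2) (hp : p.IsHomogeneous 3) (hp0 : p ≠ 0) :
    ∃ q, (q = Px^3 ∨ q = Px^2*Py ∨ q = Px*(Px^2+Py^2) ∨ q = Px*(Px^2-Py^2))
      ∧ ProjEquiv p q := by
  obtain ⟨a, b, c, d, hr⟩ : ∃ a b c d : ℝ,
      p = C a*Px^3 + C b*(Px^2*Py) + C c*(Px*Py^2) + C d*Py^3 :=
    ⟨_, _, _, _, cubic_repr p hp⟩
  have hev : ∀ v : Fin 2 → ℝ,
      eval v p = a*(v 0)^3 + b*(v 0)^2*(v 1) + c*(v 0)*(v 1)^2 + d*(v 1)^3 := by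
    intro v; rw [hr]; exact eval_form a b c d v
  obtain ⟨v, hvz, hvd⟩ : ∃ v : Fin 2 → ℝ, eval v p = 0 ∧ (v 0)^2 + (v 1)^2 ≠ 0 := by
    by_cases ha : a = 0
    · refine ⟨![1, 0], by rw [hev]; norm_num [ha], by norm_num⟩
    · obtain ⟨t, ht⟩ := cubic_root_exists a b c d ha
      refine ⟨![t, 1], by rw [hev]; norm_num; linear_combination ht, by norm_num; positivity⟩
  have hA1 : IsUnit (!![v 0, v 1; -(v 1), v 0] : M2) := by
    apply isUnit_of_det; norm_num; intro h; exact hvd (by linear_combination h)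
  have hpe1 : ProjEquiv p (polyAct !![v 0, v 1; -(v 1), v 0] p) :=
    ⟨_, hA1, 1, one_ne_zero, (one_smul _ _).symm⟩
  obtain ⟨a', b', c', d', hr1⟩ : ∃ a' b' c' d' : ℝ,
      polyAct !![v 0, v 1; -(v 1), v 0] p
        = C a'*Px^3 + C b'*(Px^2*Py) + C c'*(Px*Py^2) + C d'*Py^3 :=
    ⟨_, _, _, _, cubic_repr _ (polyAct_homog _ p hp)⟩
  have hev1 : ∀ w : Fin 2 → ℝ, eval w (polyAct !![v 0, v 1; -(v 1), v 0] p)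
      = a'*(w 0)^3 + b'*(w 0)^2*(w 1) + c'*(w 0)*(w 1)^2 + d'*(w 1)^3 := by
    intro w; rw [hr1]; exact eval_form a' b' c' d' w
  have ha' : a' = 0 := by
    have h1 := hev1 ![1, 0]
    rw [eval_polyAct] at h1
    have h2 : (fun i => (![1,0] : Fin 2 → ℝ) 0 * !![v 0, v 1; -(v 1), v 0] 0 i
        + (![1,0] : Fin 2 → ℝ) 1 * !![v 0, v 1; -(v 1), v 0] 1 i) = v := by
      funext i; fin_cases i <;> norm_num
    rw [h2, hvz] at h1
    norm_num at h1
    exact h1.symm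
  have hq1ne : polyAct !![v 0, v 1; -(v 1), v 0] p ≠ 0 := hpe1.ne_zero hp0
  have hbcd : ¬(b' = 0 ∧ c' = 0 ∧ d' = 0) := by
    rintro ⟨h1, h2, h3⟩
    exact hq1ne (by rw [hr1, ha', h1, h2, h3]; simp)
  by_cases hb : b' = 0
  · by_cases hcc : c' = 0
    · have hd' : d' ≠ 0 := fun h => hbcd ⟨hb, hcc, h⟩
      refine ⟨Px^3, Or.inl rfl, hpe1.trans ⟨!![0, 1; 1, 0], ?_, d', hd', ?_⟩⟩
      · apply isUnit_of_det; norm_num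
      · apply MvPolynomial.funext; intro w
        rw [eval_polyAct, hev1, smul_eval, eval_Px3, ha', hb, hcc]
        norm_num
    · refine ⟨Px^2*Py, Or.inr (Or.inl rfl),
        hpe1.trans ⟨!![-d'/c', 1; 1/c', 0], ?_, 1, one_ne_zero, ?_⟩⟩
      · apply isUnit_of_det; norm_num; exact hcc
      · apply MvPolynomial.funext; intro w
        rw [eval_polyAct, hev1, smul_eval, eval_Px2Py, ha', hb]
        norm_num
        field_simp
        ring
  · have hpe2 : ProjEquiv (polyAct !![v 0, v 1; -(v 1), v 0] p)
        (polyAct !![1, 0; -c'/(2*b'), 1] (polyAct !![v 0, v 1; -(v 1), v 0] p)) :=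
      ⟨_, by apply isUnit_of_det; norm_num, 1, one_ne_zero, (one_smul _ _).symm⟩
    have hev2 : ∀ w : Fin 2 → ℝ,
        eval w (polyAct !![1, 0; -c'/(2*b'), 1] (polyAct !![v 0, v 1; -(v 1), v 0] p))
        = b'*(w 0)^2*(w 1) + (d' - c'^2/(4*b'))*(w 1)^3 := by
      intro w
      rw [eval_polyAct, hev1, ha']
      norm_num
      field_simp
      ring
    by_cases he : d' - c'^2/(4*b') = 0
    · refine ⟨Px^2*Py, Or.inr (Or.inl rfl),
        hpe1.trans (hpe2.trans ⟨1, isUnit_one, b', hb, ?_⟩)⟩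
      rw [polyAct_one]
      apply MvPolynomial.funext; intro w
      rw [hev2, smul_eval, eval_Px2Py, he]
      ring
    · by_cases hpos : 0 < (d' - c'^2/(4*b'))/b'
      · have hl2 : Real.sqrt ((d' - c'^2/(4*b'))/b') ^ 2 = (d' - c'^2/(4*b'))/b' :=
          Real.sq_sqrt hpos.le
        have hl0 : Real.sqrt ((d' - c'^2/(4*b'))/b') ≠ 0 := (Real.sqrt_pos.2 hpos).ne'
        refine ⟨Px*(Px^2+Py^2), Or.inr (Or.inr (Or.inl rfl)),
          hpe1.trans (hpe2.trans
            ⟨!![0, 1; Real.sqrt ((d' - c'^2/(4*b'))/b'), 0], ?_, d' - c'^2/(4*b'), he, ?_⟩)⟩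
        · apply isUnit_of_det; norm_num; exact hl0
        · apply MvPolynomial.funext; intro w
          rw [eval_polyAct, hev2, smul_eval, eval_Pplus]
          norm_num
          have expand : b' * (w 1 * Real.sqrt ((d' - c'^2/(4*b'))/b')) ^ 2 * w 0
              = b' * ((d' - c'^2/(4*b'))/b') * (w 1)^2 * w 0 := by
            rw [mul_pow, hl2]; ring
          rw [expand]
          field_simp
          ring
      · have hneg : (d' - c'^2/(4*b'))/b' < 0 :=
          lt_of_le_of_ne (not_lt.1 hpos) (div_ne_zero he hb)
        have hl2 : Real.sqrt (-((d' - c'^2/(4*b'))/b')) ^ 2 = -((d' - c'^2/(4*b'))/b') :=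
          Real.sq_sqrt (by linarith)
        have hl0 : Real.sqrt (-((d' - c'^2/(4*b'))/b')) ≠ 0 :=
          (Real.sqrt_pos.2 (by linarith)).ne'
        refine ⟨Px*(Px^2-Py^2), Or.inr (Or.inr (Or.inr rfl)),
          hpe1.trans (hpe2.trans
            ⟨!![0, 1; Real.sqrt (-((d' - c'^2/(4*b'))/b')), 0], ?_, d' - c'^2/(4*b'), he, ?_⟩)⟩
        · apply isUnit_of_det; norm_num; exact hl0
        · apply MvPolynomial.funext; intro w
          rw [eval_polyAct, hev2, smul_eval, eval_Pminus]
          norm_num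
          have expand : b' * (w 1 * Real.sqrt (-((d' - c'^2/(4*b'))/b'))) ^ 2 * w 0
              = b' * (-((d' - c'^2/(4*b'))/b')) * (w 1)^2 * w 0 := by
            rw [mul_pow, hl2]; ring
          rw [expand]
          field_simp
          ring

/-- Lemma 2.10, first part: every nonzero homogeneous cubic in two
variables is projectively equivalent to exactly one of `x³`, `x²y`, `x(x²+y²)`,
`x(x²−y²)`. -/
theorem stmt15 (p : Poly2) (hp : p.IsHomogeneous 3) (hp0 : p ≠ 0) :
    ∃! q : Poly2,
      q ∈ ({Px ^ 3, Px ^ 2 * Py, Px * (Px ^ 2 + Py ^ 2), Px * (Px ^ 2 - Py ^ 2)} :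
        Set Poly2) ∧ ProjEquiv p q := by
  obtain ⟨q, hq, hpq⟩ := exists_rep p hp hp0
  refine ⟨q, ⟨?_, hpq⟩, ?_⟩
  · rcases hq with rfl | rfl | rfl | rfl <;> simp [Set.mem_insert_iff]
  · rintro q' ⟨hq', hpq'⟩
    have hq'' : q' = Px^3 ∨ q' = Px^2*Py ∨ q' = Px*(Px^2+Py^2) ∨ q' = Px*(Px^2-Py^2) := by
      simpa [Set.mem_insert_iff] using hq'
    exact reps_eq hq'' hq (hpq'.symm.trans hpq)
end
end
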